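/- arXiv:1705.05317 — 7 statements merged into one kernel-verified Lean document; each statement's English description precedes it below -/
import Mathlib

section
/- For the path P_n on n ≥ 2 vertices, cfc(P_n) = ⌈log₂ n⌉. -/
open SimpleGraph

universe u

/-- An edge coloring makes `G` conflict-free connected: every two distinct vertices are
joined by a path on which some color appears on exactly one edge. -/
def IsCFCColoring {V : Type u} (G : SimpleGraph V) (c : Sym2 V → ℕ) : Prop :=
  ∀ u v : V, u ≠ v → ∃ p : G.Walk u v, p.IsPath ∧
    ∃ color : ℕ, (p.edges.map c).count color = 1

/-- The conflict-free connection number: the least number of colors in a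
conflict-free connection coloring. -/
noncomputable def cfcNum {V : Type u} (G : SimpleGraph V) : ℕ :=
  sInf {n : ℕ | ∃ c : Sym2 V → ℕ, (∀ e ∈ G.edgeSet, c e < n) ∧ IsCFCColoring G c}

/-- The line graph of `G`. -/
def lineG {V : Type u} (G : SimpleGraph V) : SimpleGraph G.edgeSet where
  Adj e f := e ≠ f ∧ ∃ v : V, v ∈ (e : Sym2 V) ∧ v ∈ (f : Sym2 V)
  symm := ⟨by rintro e f ⟨h, v, hv, hw⟩; exact ⟨h.symm, v, hw, hv⟩⟩
  loopless := ⟨by rintro e ⟨h, _⟩; exact h rfl⟩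

/-- The `k`-iterated line graph, as a bundled pair (vertex type, graph). -/
def iterLine {V : Type u} (G : SimpleGraph V) : ℕ → (W : Type u) × SimpleGraph W
  | 0 => ⟨V, G⟩
  | n + 1 => ⟨(iterLine G n).2.edgeSet, lineG (iterLine G n).2⟩

/-- The subgraph of `G` induced by the set of cut-edges (bridges) of `G`. -/
def cutG {V : Type u} (G : SimpleGraph V) : SimpleGraph V :=
  SimpleGraph.fromEdgeSet {e | G.IsBridge e}

/-- `h(G)`: the maximum of `cfcNum(K)` over connected components `K` of `C(G)`. -/
noncomputable def hG {V : Type u} (G : SimpleGraph V) : ℕ :=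
  sSup (Set.range fun K : (cutG G).ConnectedComponent => cfcNum ((cutG G).induce K.supp))

/-- `G` is claw-free: no induced `K_{1,3}`. -/
def ClawFree {V : Type u} (G : SimpleGraph V) : Prop :=
  ∀ v a b c : V, G.Adj v a → G.Adj v b → G.Adj v c →
    a ≠ b → a ≠ c → b ≠ c → ¬G.Adj a b → ¬G.Adj a c → ¬G.Adj b c → False

/-- `G` has no cut vertex: deleting any vertex leaves a connected graph. -/
def NoCutVertex {V : Type u} (G : SimpleGraph V) : Prop :=
  ∀ v : V, (G.induce {w | w ≠ v}).Connected

/-- `B` is a block of `G`: a maximal vertex set inducing a connected subgraph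
without cut vertices. -/
def IsBlock {V : Type u} (G : SimpleGraph V) (B : Set V) : Prop :=
  (G.induce B).Connected ∧ NoCutVertex (G.induce B) ∧
    ∀ B' : Set V, B ⊆ B' → (G.induce B').Connected → NoCutVertex (G.induce B') → B' = B

/-- Every component of `C(G)` is a cut-path of `G`: `C(G)` is a linear forest
(acyclic with maximum degree at most 2) and every internal vertex (degree-2 vertex
of `C(G)`) has degree 2 in `G`. -/
def CutPathCondition {V : Type u} (G : SimpleGraph V) : Prop :=
  (cutG G).IsAcyclic ∧ (∀ v : V, ((cutG G).neighborSet v).ncard ≤ 2) ∧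
    ∀ v : V, ((cutG G).neighborSet v).ncard = 2 → (G.neighborSet v).ncard = 2

namespace CFCAux


/-- The `i`-th edge of the path graph. -/
def eI (n i : ℕ) (h : i + 1 < n) : Sym2 (Fin n) :=
  s(⟨i, by omega⟩, ⟨i + 1, h⟩)

lemma eI_mem_edgeSet (n i : ℕ) (h : i + 1 < n) : eI n i h ∈ (pathGraph n).edgeSet := by
  simp [eI, SimpleGraph.mem_edgeSet, pathGraph_adj]

lemma cross {n : ℕ} {u v : Fin n} (p : (pathGraph n).Walk u v) :
    ∀ (k : ℕ) (hk : k + 1 < n), u.val ≤ k → k < v.val → eI n k hk ∈ p.edges := by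
  induction p with
  | nil => intro k hk h1 h2; omega
  | @cons a w b ha q ih =>
    intro k hk h1 h2
    rw [SimpleGraph.Walk.edges_cons]
    rw [pathGraph_adj] at ha
    by_cases hw : w.val ≤ k
    · exact List.mem_cons_of_mem _ (ih k hk hw h2)
    · rcases ha with ha | ha
      · have he : s(a, w) = eI n k hk := by
          unfold eI
          have hu : a = (⟨k, Nat.lt_of_succ_lt hk⟩ : Fin n) := Fin.ext (by show a.val = k; omega)
          have hwk : w = (⟨k + 1, hk⟩ : Fin n) := Fin.ext (by show w.val = k + 1; omega)
          subst hu; subst hwk; rfl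
        rw [he]
        exact List.mem_cons_self
      · exact (hw (by omega)).elim

lemma cross' {n : ℕ} {u v : Fin n} (p : (pathGraph n).Walk u v) (k : ℕ) (hk : k + 1 < n)
    (h1 : v.val ≤ k) (h2 : k < u.val) : eI n k hk ∈ p.edges := by
  have := cross p.reverse k hk h1 h2
  rwa [SimpleGraph.Walk.edges_reverse, List.mem_reverse] at this



/-- The increasing walk in the path graph. -/
def upWalk (n : ℕ) : (k : ℕ) → (u : Fin n) → (h : u.val + k < n) →
    (pathGraph n).Walk u ⟨u.val + k, h⟩
  | 0, u, h => Walk.nil.copy rfl (Fin.ext (by simp))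
  | k + 1, u, h =>
    (Walk.cons (by rw [pathGraph_adj]; left; rfl :
        (pathGraph n).Adj u ⟨u.val + 1, by omega⟩)
      (upWalk n k ⟨u.val + 1, by omega⟩ (show u.val + 1 + k < n by omega))).copy rfl
      (Fin.ext (show u.val + 1 + k = u.val + (k + 1) by omega))

lemma upWalk_edges_map (n : ℕ) (c : Sym2 (Fin n) → ℕ) (d : ℕ → ℕ)
    (hd : ∀ i (h' : i + 1 < n), c (eI n i h') = d i) :
    ∀ (k : ℕ) (u : Fin n) (h : u.val + k < n),
      (upWalk n k u h).edges.map c = (List.range' u.val k).map d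
  | 0, u, h => by simp [upWalk]
  | k + 1, u, h => by
    rw [upWalk, Walk.edges_copy, Walk.edges_cons, List.range'_succ]
    simp only [List.map_cons]
    rw [upWalk_edges_map n c d hd k ⟨u.val + 1, by omega⟩ (show u.val + 1 + k < n by omega)]
    congr 1
    exact hd u.val (by omega)

lemma upWalk_support_lb (n : ℕ) : ∀ (k : ℕ) (u : Fin n) (h : u.val + k < n)
    (x : Fin n), x ∈ (upWalk n k u h).support → u.val ≤ x.val
  | 0, u, h, x => by
    rw [upWalk, Walk.support_copy, Walk.support_nil]
    intro hx
    simp at hx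
    omega
  | k + 1, u, h, x => by
    rw [upWalk, Walk.support_copy, Walk.support_cons]
    intro hx
    rcases List.mem_cons.mp hx with rfl | hx
    · exact le_rfl
    · have h2 := upWalk_support_lb n k ⟨u.val + 1, by omega⟩
        (show u.val + 1 + k < n by omega) x hx
      have h3 : u.val + 1 ≤ x.val := h2
      omega

lemma upWalk_isPath (n : ℕ) : ∀ (k : ℕ) (u : Fin n) (h : u.val + k < n),
    (upWalk n k u h).IsPath
  | 0, u, h => by rw [upWalk]; simp
  | k + 1, u, h => by
    rw [upWalk]
    rw [Walk.isPath_copy, Walk.cons_isPath_iff]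
    refine ⟨upWalk_isPath n k _ _, fun hx => ?_⟩
    have h2 := upWalk_support_lb n k ⟨u.val + 1, by omega⟩
      (show u.val + 1 + k < n by omega) u hx
    have h3 : u.val + 1 ≤ u.val := h2
    omega

/-- Key helper: in a path from `u` to `v` with `u < v`, no vertex of the support
can split the walk so that both pieces use a common edge. -/
lemma not_both {n : ℕ} {u v : Fin n} (p : (pathGraph n).Walk u v) (hp : p.IsPath)
    (w : Fin n) (hw : w ∈ p.support) (k : ℕ) (hk : k + 1 < n)
    (h1 : eI n k hk ∈ (p.takeUntil w hw).edges) (h2 : eI n k hk ∈ (p.dropUntil w hw).edges) :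
    False := by
  have hnd : p.edges.Nodup := hp.isTrail.edges_nodup
  rw [← p.take_spec hw, Walk.edges_append, List.nodup_append] at hnd
  exact hnd.2.2 _ h1 _ h2 rfl

lemma edges_sub {n : ℕ} {u v : Fin n} (p : (pathGraph n).Walk u v) (hp : p.IsPath)
    (huv : u.val < v.val) {e : Sym2 (Fin n)} (he : e ∈ p.edges) :
    ∃ (k : ℕ) (hk : k + 1 < n), u.val ≤ k ∧ k < v.val ∧ e = eI n k hk := by
  have hadj : e ∈ (pathGraph n).edgeSet := p.edges_subset_edgeSet he
  induction e with
  | _ a b =>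
    rw [SimpleGraph.mem_edgeSet, pathGraph_adj] at hadj
    -- reduce to the case a.val + 1 = b.val
    wlog hab : a.val + 1 = b.val generalizing a b with H
    · have hba : b.val + 1 = a.val := by omega
      rw [Sym2.eq_swap] at he ⊢
      exact H b a he (Or.inl hba) hba
    · -- e = eI n a.val _
      have hk : a.val + 1 < n := by omega
      have heq : s(a, b) = eI n a.val hk := by
        unfold eI
        have h1 : a = (⟨a.val, by omega⟩ : Fin n) := Fin.ext rfl
        have h2 : b = (⟨a.val + 1, hk⟩ : Fin n) := Fin.ext (show b.val = a.val + 1 by omega)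
        rw [← h1, ← h2]
      refine ⟨a.val, hk, ?_, ?_, heq⟩
      · -- u.val ≤ a.val
        by_contra hlt
        push_neg at hlt
        have hav : a ∈ p.support := p.fst_mem_support_of_mem_edges he
        have e1 : eI n a.val hk ∈ (p.takeUntil a hav).edges :=
          cross' (p.takeUntil a hav) a.val hk le_rfl hlt
        have e2 : eI n a.val hk ∈ (p.dropUntil a hav).edges :=
          cross (p.dropUntil a hav) a.val hk le_rfl (by omega)
        exact not_both p hp a hav a.val hk e1 e2
      · -- a.val < v.val
        by_contra hlt
        push_neg at hlt
        have hbv : b ∈ p.support := p.snd_mem_support_of_mem_edges he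
        have hvk : v.val + 1 < n := by omega
        have e1 : eI n v.val hvk ∈ (p.takeUntil b hbv).edges :=
          cross (p.takeUntil b hbv) v.val hvk (by omega) (by omega)
        have e2 : eI n v.val hvk ∈ (p.dropUntil b hbv).edges :=
          cross' (p.dropUntil b hbv) v.val hvk le_rfl (by omega)
        exact not_both p hp b hbv v.val hvk e1 e2

lemma path_edges_perm {n : ℕ} {u v : Fin n} (p q : (pathGraph n).Walk u v)
    (hp : p.IsPath) (hq : q.IsPath) (huv : u.val < v.val) : p.edges.Perm q.edges := by
  rw [List.perm_ext_iff_of_nodup hp.isTrail.edges_nodup hq.isTrail.edges_nodup]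
  intro e
  constructor
  · intro he
    obtain ⟨k, hk, h1, h2, rfl⟩ := edges_sub p hp huv he
    exact cross q k hk h1 h2
  · intro he
    obtain ⟨k, hk, h1, h2, rfl⟩ := edges_sub q hq huv he
    exact cross p k hk h1 h2



lemma nodup_all_eq {α : Type*} [DecidableEq α] {l : List α} (hl : l.Nodup) {i : α}
    (hi : i ∈ l) (hall : ∀ j ∈ l, j = i) : l = [i] := by
  cases l with
  | nil => cases hi
  | cons a t =>
    have ha : a = i := hall a List.mem_cons_self
    subst ha
    have ht : t = [] := by
      rw [List.eq_nil_iff_forall_not_mem]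
      intro x hx
      have := hall x (List.mem_cons_of_mem _ hx)
      subst this
      exact (List.nodup_cons.mp hl).1 hx
    rw [ht]

lemma countP_eq_one_iff {l : List ℕ} (hl : l.Nodup) (p : ℕ → Bool) :
    l.countP p = 1 ↔ ∃ i ∈ l, p i ∧ ∀ j ∈ l, p j → j = i := by
  rw [List.countP_eq_length_filter]
  constructor
  · intro h
    obtain ⟨i, hi⟩ := List.length_eq_one_iff.mp h
    have himem : i ∈ l.filter p := hi ▸ List.mem_singleton_self i
    rw [List.mem_filter] at himem
    refine ⟨i, himem.1, himem.2, fun j hj hpj => ?_⟩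
    have : j ∈ l.filter p := List.mem_filter.mpr ⟨hj, hpj⟩
    rw [hi, List.mem_singleton] at this
    exact this
  · rintro ⟨i, hi, hpi, huniq⟩
    have : l.filter p = [i] := by
      apply nodup_all_eq (hl.filter p)
      · exact List.mem_filter.mpr ⟨hi, hpi⟩
      · intro j hj
        rw [List.mem_filter] at hj
        exact huniq j hj.1 hj.2
    rw [this]
    rfl

lemma count_map_eq_countP (d : ℕ → ℕ) (l : List ℕ) (col : ℕ) :
    (l.map d).count col = l.countP (fun i => d i == col) := by
  rw [List.count, List.countP_map]
  rfl

/-- The key combinatorial lower bound for conflict-free interval colorings. -/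
lemma cf_lower (N : ℕ) : ∀ (d : ℕ → ℕ) (S : Finset ℕ), S.card ≤ N →
    ∀ a b : ℕ, (∀ i, a ≤ i → i < b → d i ∈ S) →
    (∀ u v, a ≤ u → u < v → v ≤ b →
      ∃ i, u ≤ i ∧ i < v ∧ ∀ j, u ≤ j → j < v → d j = d i → j = i) →
    b ≤ a + (2 ^ N - 1) := by
  induction N with
  | zero =>
    intro d S hS a b hcol hcf
    by_contra h
    push_neg at h
    have : d a ∈ S := hcol a le_rfl (by omega)
    have : S.Nonempty := ⟨d a, this⟩
    have := Finset.card_pos.mpr this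
    omega
  | succ N ih =>
    intro d S hS a b hcol hcf
    by_cases hab : b ≤ a
    · omega
    push_neg at hab
    obtain ⟨i, hi1, hi2, huniq⟩ := hcf a b le_rfl hab le_rfl
    have hdi : d i ∈ S := hcol i hi1 hi2
    have hScard : (S.erase (d i)).card ≤ N := by
      have := Finset.card_erase_of_mem hdi
      have := Finset.card_pos.mpr ⟨d i, hdi⟩
      omega
    have hleft : i ≤ a + (2 ^ N - 1) := by
      apply ih d (S.erase (d i)) hScard a i
      · intro j hj1 hj2
        refine Finset.mem_erase.mpr ⟨fun h => ?_, hcol j hj1 (by omega)⟩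
        have := huniq j hj1 (by omega) h
        omega
      · intro x y hx hxy hy
        exact hcf x y hx hxy (by omega)
    have hright : b ≤ (i + 1) + (2 ^ N - 1) := by
      apply ih d (S.erase (d i)) hScard (i + 1) b
      · intro j hj1 hj2
        refine Finset.mem_erase.mpr ⟨fun h => ?_, hcol j (by omega) hj2⟩
        have := huniq j (by omega) hj2 h
        omega
      · intro x y hx hxy hy
        exact hcf x y (by omega) hxy hy
    have hpow : 2 ^ (N + 1) = 2 ^ N + 2 ^ N := by rw [pow_succ]; omega
    have h1 : 1 ≤ 2 ^ N := Nat.one_le_two_pow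
    omega

/-- Uniqueness of the maximum 2-adic valuation in an interval. -/
lemma val_unique_max (a b : ℕ) (ha : 0 < a) (hab : a ≤ b) :
    ∃ x, a ≤ x ∧ x ≤ b ∧ ∀ y, a ≤ y → y ≤ b →
      y.factorization 2 = x.factorization 2 → y = x := by
  obtain ⟨x, hx, hmax⟩ := Finset.exists_max_image (Finset.Icc a b)
    (fun y => y.factorization 2) (⟨a, by simp [hab]⟩)
  rw [Finset.mem_Icc] at hx
  have key : ∀ p q : ℕ, a ≤ p → p ≤ b → a ≤ q → q ≤ b → p < q →
      p.factorization 2 = q.factorization 2 →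
      q.factorization 2 = x.factorization 2 → False := by
    intro p q hap hpb haq hqb hpq hfpq hfq
    set M := x.factorization 2 with hM
    have hp0 : p ≠ 0 := by omega
    have hq0 : q ≠ 0 := by omega
    have hdvdp : 2 ^ M ∣ p := by
      rw [Nat.Prime.pow_dvd_iff_le_factorization Nat.prime_two hp0]
      omega
    have hdvdq : 2 ^ M ∣ q := by
      rw [Nat.Prime.pow_dvd_iff_le_factorization Nat.prime_two hq0]
      omega
    have hndvd : ¬ (2 ^ (M + 1) ∣ p) := by
      rw [Nat.Prime.pow_dvd_iff_le_factorization Nat.prime_two hp0]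
      omega
    -- z = p + 2^M has valuation > M, and lies in [a, b]
    set z := p + 2 ^ M with hz
    have hz0 : z ≠ 0 := by positivity
    have hdvdz : 2 ^ (M + 1) ∣ z := by
      obtain ⟨m, hm⟩ := hdvdp
      have hmodd : ¬ (2 ∣ m) := by
        intro ⟨t, ht⟩
        exact hndvd ⟨t, by rw [hm, ht]; ring⟩
      have h2 : 2 ∣ (m + 1) := by omega
      obtain ⟨s, hs⟩ := h2
      have hzm : z = 2 ^ M * (m + 1) := by rw [hz, hm]; ring
      exact ⟨s, by rw [hzm, hs, pow_succ]; ring⟩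
    have hzq : z ≤ q := by
      have hd : 2 ^ M ∣ q - p := Nat.dvd_sub hdvdq hdvdp
      have : 2 ^ M ≤ q - p := Nat.le_of_dvd (by omega) hd
      omega
    have hmem : z ∈ Finset.Icc a b := Finset.mem_Icc.mpr ⟨by omega, by omega⟩
    have hle := hmax z hmem
    have : M + 1 ≤ z.factorization 2 := by
      rw [← Nat.Prime.pow_dvd_iff_le_factorization Nat.prime_two hz0]
      exact hdvdz
    omega
  refine ⟨x, hx.1, hx.2, fun y hy1 hy2 hf => ?_⟩
  rcases lt_trichotomy y x with h | h | h
  · exact absurd (key y x hy1 hy2 hx.1 hx.2 h hf rfl) (fun h => h)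
  · exact h
  · exact absurd (key x y hx.1 hx.2 hy1 hy2 h hf.symm hf) (fun h => h)


/-- The valuation of a positive integer below `n` is less than `clog 2 n`. -/
lemma f_lt {n : ℕ} (hn : 2 ≤ n) (m : ℕ) (h1 : 1 ≤ m) (h2 : m ≤ n - 1) :
    m.factorization 2 < Nat.clog 2 n := by
  by_contra hcon
  push_neg at hcon
  have hdvd : 2 ^ (m.factorization 2) ∣ m :=
    (Nat.Prime.pow_dvd_iff_le_factorization Nat.prime_two (by omega)).mpr le_rfl
  have hle : 2 ^ (m.factorization 2) ≤ m := Nat.le_of_dvd (by omega) hdvd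
  have h3 : n ≤ 2 ^ Nat.clog 2 n := Nat.le_pow_clog one_lt_two n
  have h4 : (2:ℕ) ^ Nat.clog 2 n ≤ 2 ^ (m.factorization 2) :=
    Nat.pow_le_pow_right (by omega) hcon
  omega

/-- The canonical "binary ruler" coloring of the path graph. -/
def pcol (n : ℕ) : Sym2 (Fin n) → ℕ :=
  Sym2.lift ⟨fun i j => (max i.val j.val).factorization 2, fun i j => by simp [max_comm]⟩

lemma pcol_eI (n i : ℕ) (h' : i + 1 < n) : pcol n (eI n i h') = (i + 1).factorization 2 := by
  show (max i (i + 1)).factorization 2 = (i + 1).factorization 2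
  rw [max_eq_right (Nat.le_succ i)]

/-- The induced coloring of edge indices. -/
def dIdx (n : ℕ) (c' : Sym2 (Fin n) → ℕ) : ℕ → ℕ :=
  fun i => if h : i + 1 < n then c' (eI n i h) else 0

lemma dIdx_eq (n : ℕ) (c' : Sym2 (Fin n) → ℕ) :
    ∀ (i : ℕ) (h' : i + 1 < n), c' (eI n i h') = dIdx n c' i := by
  intro i h'
  unfold dIdx
  rw [dif_pos h']

end CFCAux

open CFCAux in
/-- cfc(P_n) = ⌈log₂ n⌉. -/
theorem stmt_2 (n : ℕ) (hn : 2 ≤ n) :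
    cfcNum (SimpleGraph.pathGraph n) = Nat.clog 2 n := by
  classical
  have hcolors : ∀ e ∈ (SimpleGraph.pathGraph n).edgeSet, pcol n e < Nat.clog 2 n := by
    intro e he
    induction e with
    | _ a b =>
      rw [SimpleGraph.mem_edgeSet, SimpleGraph.pathGraph_adj] at he
      show (max a.val b.val).factorization 2 < Nat.clog 2 n
      have ha := a.isLt
      have hb := b.isLt
      exact f_lt hn _ (by omega) (by omega)
  have key : ∀ x y : Fin n, x.val < y.val → ∃ p : (SimpleGraph.pathGraph n).Walk x y,
      p.IsPath ∧ ∃ color : ℕ, (p.edges.map (pcol n)).count color = 1 := by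
    intro x y h
    have hvn : x.val + (y.val - x.val) < n := by have := y.isLt; omega
    refine ⟨(upWalk n (y.val - x.val) x hvn).copy rfl
      (Fin.ext (show x.val + (y.val - x.val) = y.val by omega)), ?_, ?_⟩
    · rw [SimpleGraph.Walk.isPath_copy]
      exact upWalk_isPath n _ x hvn
    · obtain ⟨z, hz1, hz2, hzu⟩ := val_unique_max (x.val + 1) y.val (by omega) (by omega)
      refine ⟨z.factorization 2, ?_⟩
      rw [SimpleGraph.Walk.edges_copy,
        upWalk_edges_map n (pcol n) (fun i => (i + 1).factorization 2) (pcol_eI n) _ x hvn,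
        count_map_eq_countP, countP_eq_one_iff List.nodup_range']
      refine ⟨z - 1, List.mem_range'_1.mpr ⟨by omega, by omega⟩, ?_, ?_⟩
      · simp only [beq_iff_eq]
        show (z - 1 + 1).factorization 2 = z.factorization 2
        have hzz : z - 1 + 1 = z := by omega
        rw [hzz]
      · intro j hj hpj
        rw [List.mem_range'_1] at hj
        simp only [beq_iff_eq] at hpj
        have := hzu (j + 1) (by omega) (by omega) hpj
        omega
  have hCFC : IsCFCColoring (SimpleGraph.pathGraph n) (pcol n) := by
    intro x y hxy
    have hne : x.val ≠ y.val := fun h => hxy (Fin.ext h)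
    rcases Nat.lt_or_ge x.val y.val with h | h
    · exact key x y h
    · have h' : y.val < x.val := by omega
      obtain ⟨p, hp, col, hcount⟩ := key y x h'
      refine ⟨p.reverse, hp.reverse, col, ?_⟩
      rw [SimpleGraph.Walk.edges_reverse, List.map_reverse, List.count_reverse]
      exact hcount
  have hmem : Nat.clog 2 n ∈ {m : ℕ | ∃ c : Sym2 (Fin n) → ℕ,
      (∀ e ∈ (SimpleGraph.pathGraph n).edgeSet, c e < m) ∧
      IsCFCColoring (SimpleGraph.pathGraph n) c} := ⟨pcol n, hcolors, hCFC⟩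
  have hlow : ∀ m ∈ {m : ℕ | ∃ c : Sym2 (Fin n) → ℕ,
      (∀ e ∈ (SimpleGraph.pathGraph n).edgeSet, c e < m) ∧
      IsCFCColoring (SimpleGraph.pathGraph n) c}, Nat.clog 2 n ≤ m := by
    rintro m ⟨c', hcol', hcfc'⟩
    rw [Nat.clog_le_iff_le_pow one_lt_two]
    have hmain : n - 1 ≤ 0 + (2 ^ m - 1) := by
      apply cf_lower m (dIdx n c') (Finset.range m) (by simp) 0 (n - 1)
      · intro i _ hi
        have h' : i + 1 < n := by omega
        rw [← dIdx_eq n c' i h']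
        exact Finset.mem_range.mpr (hcol' _ (eI_mem_edgeSet n i h'))
      · intro u v _ huv hv
        have hun : u < n := by omega
        have hvn : v < n := by omega
        have hne : (⟨u, hun⟩ : Fin n) ≠ ⟨v, hvn⟩ := by
          intro hEq
          have h3 : u = v := congrArg Fin.val hEq
          omega
        obtain ⟨p, hp, col, hcount⟩ := hcfc' ⟨u, hun⟩ ⟨v, hvn⟩ hne
        have hq : (⟨u, hun⟩ : Fin n).val + (v - u) < n := by
          show u + (v - u) < n
          omega
        have hqpath : ((upWalk n (v - u) ⟨u, hun⟩ hq).copy rfl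
            (Fin.ext (show u + (v - u) = v by omega) :
              (⟨u + (v - u), hq⟩ : Fin n) = ⟨v, hvn⟩)).IsPath := by
          rw [SimpleGraph.Walk.isPath_copy]
          exact upWalk_isPath n _ _ hq
        have hperm := path_edges_perm p _ hp hqpath (show u < v from huv)
        have h2 : (((upWalk n (v - u) ⟨u, hun⟩ hq).copy rfl
            (Fin.ext (show u + (v - u) = v by omega) :
              (⟨u + (v - u), hq⟩ : Fin n) = ⟨v, hvn⟩)).edges.map c').count col = 1 := by
          rw [← (hperm.map c').count_eq]
          exact hcount
        rw [SimpleGraph.Walk.edges_copy,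
          upWalk_edges_map n c' (dIdx n c') (dIdx_eq n c') _ _ hq,
          count_map_eq_countP, countP_eq_one_iff List.nodup_range'] at h2
        obtain ⟨i, himem, hpi, huniq⟩ := h2
        rw [List.mem_range'_1] at himem
        have hcu : (⟨u, hun⟩ : Fin n).val = u := rfl
        refine ⟨i, himem.1, by omega, fun j hj1 hj2 hdj => ?_⟩
        apply huniq j (List.mem_range'_1.mpr ⟨hj1, by omega⟩)
        simp only [beq_iff_eq] at hpi ⊢
        rw [hdj]
        simpa using hpi
    have h1 : 1 ≤ 2 ^ m := Nat.one_le_two_pow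
    omega
  apply le_antisymm
  · exact Nat.sInf_le hmem
  · exact hlow _ (Nat.sInf_mem ⟨_, hmem⟩)
end

section
/- If G is a noncomplete 2-connected graph, then cfc(G) = 2. -/
open SimpleGraph

universe u

section CFCAux

open SimpleGraph Walk

variable {V : Type u} {G : SimpleGraph V}

/-- Every pair of vertices distinct from `w` is joined by a path avoiding `w`. -/
def AvoidConn (G : SimpleGraph V) : Prop :=
  ∀ w u v : V, u ≠ v → u ≠ w → v ≠ w → ∃ p : G.Walk u v, p.IsPath ∧ w ∉ p.support

lemma avoidConn_of_h2c (h2c : ∀ v : V, (G.induce {w | w ≠ v}).Connected) : AvoidConn G := by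
  classical
  intro w u v huv huw hvw
  obtain ⟨p0⟩ := (h2c w).preconnected ⟨u, huw⟩ ⟨v, hvw⟩
  let f : G.induce {w' | w' ≠ w} →g G := ⟨Subtype.val, fun {a b} h => h⟩
  refine ⟨(p0.map f).bypass, Walk.bypass_isPath _, fun hw => ?_⟩
  have hsub := Walk.support_bypass_subset _ hw
  rw [Walk.support_map] at hsub
  obtain ⟨⟨t, ht⟩, _, h2⟩ := List.mem_map.mp hsub
  exact ht h2

lemma exists_ne_ne [Fintype V] (hcard : 3 ≤ Fintype.card V) (a b : V) :
    ∃ c, c ≠ a ∧ c ≠ b := by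
  classical
  have h : (({a, b} : Finset V)ᶜ).Nonempty := by
    rw [← Finset.card_pos, Finset.card_compl]
    have h2 : ({a, b} : Finset V).card ≤ 2 :=
      (Finset.card_insert_le _ _).trans (by simp)
    omega
  obtain ⟨c, hc⟩ := h
  simp only [Finset.mem_compl, Finset.mem_insert, Finset.mem_singleton, not_or] at hc
  exact ⟨c, hc.1, hc.2⟩

lemma connected_of_avoidConn [Fintype V] (hA : AvoidConn G) (hcard : 3 ≤ Fintype.card V) :
    G.Connected := by
  have hne : Nonempty V := Fintype.card_pos_iff.mp (by omega)
  rw [connected_iff]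
  refine ⟨fun u v => ?_, hne⟩
  rcases eq_or_ne u v with rfl | huv
  · rfl
  · obtain ⟨w, hwu, hwv⟩ := exists_ne_ne hcard u v
    obtain ⟨p, -, -⟩ := hA w u v huv (Ne.symm hwu) (Ne.symm hwv)
    exact ⟨p⟩

lemma isPath_append_aux {u v w : V} {p : G.Walk u v} {q : G.Walk v w} (hp : p.IsPath)
    (hq : q.IsPath) (h : ∀ x, x ∈ p.support → x ∈ q.support → x = v) :
    (p.append q).IsPath := by
  rw [Walk.isPath_def, Walk.support_append]
  refine List.Nodup.append hp.support_nodup (hq.support_nodup.tail) ?_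
  intro x hxp hxq
  have hxq' : x ∈ q.support := List.mem_of_mem_tail hxq
  have hxv := h x hxp hxq'
  subst hxv
  have hcons : q.support = x :: q.support.tail := q.support_eq_cons
  have hnd := hq.support_nodup
  rw [hcons] at hnd
  exact (List.nodup_cons.mp hnd).1 hxq

lemma end_not_mem_takeUntil [DecidableEq V] {a b z : V} {p : G.Walk a b} (hp : p.IsPath)
    (hz : z ∈ p.support) (hzb : z ≠ b) : b ∉ (p.takeUntil z hz).support := by
  intro hb
  have hnd := hp.support_nodup
  rw [← p.take_spec hz, Walk.support_append] at hnd
  have hbd : b ∈ (p.dropUntil z hz).support := Walk.end_mem_support _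
  rw [(p.dropUntil z hz).support_eq_cons] at hbd
  rcases List.mem_cons.mp hbd with rfl | hbt
  · exact hzb rfl
  · exact List.disjoint_of_nodup_append hnd hb hbt

lemma exists_firstHit [DecidableEq V] (S : V → Prop) :
    ∀ {a b : V} (p : G.Walk a b), p.IsPath → S b →
    ∃ z, S z ∧ ∃ q : G.Walk a z, q.IsPath ∧ (∀ x ∈ q.support, x ∈ p.support) ∧
      (∀ x ∈ q.support, S x → x = z)
  | a, _, Walk.nil, _, hb => ⟨a, hb, Walk.nil, Walk.IsPath.nil, by simp, by simp⟩
  | a, b, Walk.cons h p, hp, hb => by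
    by_cases ha : S a
    · exact ⟨a, ha, Walk.nil, Walk.IsPath.nil, by simp, by simp⟩
    · obtain ⟨z, hz, q, hq, hsub, hmin⟩ :=
        exists_firstHit S p ((Walk.cons_isPath_iff _ _).mp hp).1 hb
      refine ⟨z, hz, Walk.cons h q, ?_, ?_, ?_⟩
      · rw [Walk.cons_isPath_iff]
        exact ⟨hq, fun hmem => ((Walk.cons_isPath_iff _ _).mp hp).2 (hsub _ hmem)⟩
      · intro x hx
        rw [Walk.support_cons] at hx ⊢
        rcases List.mem_cons.mp hx with rfl | hx'
        · exact List.mem_cons_self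
        · exact List.mem_cons_of_mem _ (hsub _ hx')
      · intro x hx hSx
        rw [Walk.support_cons] at hx
        rcases List.mem_cons.mp hx with rfl | hx'
        · exact absurd hSx ha
        · exact hmin x hx' hSx

lemma twoPaths_step [DecidableEq V] {a b' b z : V} (P₁ P₂ : G.Walk a b') (h₁ : P₁.IsPath)
    (h₂ : P₂.IsPath)
    (hdisj : ∀ x, x ∈ P₁.support → x ∈ P₂.support → x = a ∨ x = b')
    (hadjb : G.Adj b' b) (hbP₂ : b ∉ P₂.support)
    (hz1 : z ∈ P₁.support) (hzb' : z ≠ b')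
    (Qpre : G.Walk b z) (hQ : Qpre.IsPath)
    (hQS : ∀ x ∈ Qpre.support, (x ∈ P₁.support ∨ x ∈ P₂.support) → x = z)
    (hQb' : b' ∉ Qpre.support) :
    ∃ R₁ R₂ : G.Walk a b, R₁.IsPath ∧ R₂.IsPath ∧
      ∀ x, x ∈ R₁.support → x ∈ R₂.support → x = a ∨ x = b := by
  have hsingle : (Walk.cons hadjb (Walk.nil : G.Walk b b)).IsPath := by
    rw [Walk.cons_isPath_iff]
    exact ⟨Walk.IsPath.nil, by simp [hadjb.ne]⟩
  have hR₂ : (P₂.append (Walk.cons hadjb Walk.nil)).IsPath := by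
    refine isPath_append_aux h₂ hsingle ?_
    intro t ht1 ht2
    simp only [Walk.support_cons, Walk.support_nil] at ht2
    rcases List.mem_cons.mp ht2 with rfl | ht2
    · rfl
    · simp only [List.mem_singleton] at ht2
      subst ht2
      exact absurd ht1 hbP₂
  have hb'take : b' ∉ (P₁.takeUntil z hz1).support := end_not_mem_takeUntil h₁ hz1 hzb'
  have hR₁ : ((P₁.takeUntil z hz1).append Qpre.reverse).IsPath := by
    refine isPath_append_aux (h₁.takeUntil hz1) hQ.reverse ?_
    intro t ht1 ht2
    rw [Walk.support_reverse, List.mem_reverse] at ht2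
    exact hQS t ht2 (Or.inl (Walk.support_takeUntil_subset _ hz1 ht1))
  refine ⟨(P₁.takeUntil z hz1).append Qpre.reverse, P₂.append (Walk.cons hadjb Walk.nil),
    hR₁, hR₂, ?_⟩
  intro t ht1 ht2
  rw [Walk.support_append, List.mem_append] at ht1 ht2
  rcases ht2 with ht2 | ht2
  swap
  · simp only [Walk.support_cons, Walk.support_nil, List.tail_cons, List.mem_singleton] at ht2
    exact Or.inr ht2
  rcases ht1 with ht1 | ht1
  · rcases hdisj t (Walk.support_takeUntil_subset _ hz1 ht1) ht2 with h | h
    · exact Or.inl h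
    · exact absurd (h ▸ ht1) hb'take
  · have ht1' : t ∈ Qpre.support := by
      have := List.mem_of_mem_tail ht1
      rwa [Walk.support_reverse, List.mem_reverse] at this
    have htz := hQS t ht1' (Or.inr ht2)
    subst htz
    rcases hdisj t hz1 ht2 with h | h
    · exact Or.inl h
    · exact absurd h hzb'

lemma twoPaths [Fintype V] (hA : AvoidConn G) (hconn : G.Connected) :
    ∀ a b : V, a ≠ b → ∃ P₁ P₂ : G.Walk a b, P₁.IsPath ∧ P₂.IsPath ∧
      ∀ x, x ∈ P₁.support → x ∈ P₂.support → x = a ∨ x = b := by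
  classical
  have key : ∀ n : ℕ, ∀ a b : V, a ≠ b → G.dist a b = n →
      ∃ P₁ P₂ : G.Walk a b, P₁.IsPath ∧ P₂.IsPath ∧
        ∀ x, x ∈ P₁.support → x ∈ P₂.support → x = a ∨ x = b := by
    intro n
    induction n using Nat.strong_induction_on with
    | _ n IH =>
    intro a b hab hd
    by_cases hadj : G.Adj a b
    · refine ⟨Walk.cons hadj Walk.nil, Walk.cons hadj Walk.nil, ?_, ?_, ?_⟩
      · rw [Walk.cons_isPath_iff]; exact ⟨Walk.IsPath.nil, by simp [hab]⟩
      · rw [Walk.cons_isPath_iff]; exact ⟨Walk.IsPath.nil, by simp [hab]⟩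
      · intro x hx _
        simp only [Walk.support_cons, Walk.support_nil, List.mem_cons,
          List.mem_singleton] at hx
        rcases hx with rfl | hx
        · exact Or.inl rfl
        · rcases hx with rfl | hx
          · exact Or.inr rfl
          · simp at hx
    · have hpos : 0 < G.dist a b := hconn.pos_dist_of_ne hab
      obtain ⟨p, hplen⟩ := hconn.exists_walk_length_eq_dist a b
      obtain ⟨b', hadj', q, hq⟩ := Walk.exists_eq_cons_of_ne (Ne.symm hab) p.reverse
      have hqlen : q.length + 1 = n := by
        have := congrArg Walk.length hq
        rw [Walk.length_reverse, hplen, hd] at this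
        simp only [Walk.length_cons] at this
        omega
      have hd1 : G.dist a b' ≤ n - 1 := by
        have := SimpleGraph.dist_le q.reverse
        rw [Walk.length_reverse] at this
        omega
      have hd2 : n ≤ G.dist a b' + 1 := by
        have ht := hconn.dist_triangle (u := a) (v := b') (w := b)
        have hbb : G.dist b' b ≤ 1 := by
          have := SimpleGraph.dist_le (Walk.cons hadj'.symm (Walk.nil : G.Walk b b))
          simpa using this
        omega
      have hd' : G.dist a b' = n - 1 := by omega
      have hab' : a ≠ b' := by
        rintro rfl
        exact hadj hadj'.symm
      have hbb' : b ≠ b' := hadj'.ne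
      obtain ⟨P₁, P₂, h₁, h₂, hdisj⟩ := IH (n - 1) (by omega) a b' hab' hd'
      by_cases hmem : b ∈ P₁.support ∨ b ∈ P₂.support
      · have hnotboth : ¬(b ∈ P₁.support ∧ b ∈ P₂.support) := by
          rintro ⟨hb1, hb2⟩
          rcases hdisj b hb1 hb2 with h | h
          · exact hab h.symm
          · exact hbb' h
        rcases hmem with hb1 | hb2
        · have hbP₂ : b ∉ P₂.support := fun hb2 => hnotboth ⟨hb1, hb2⟩
          exact twoPaths_step P₁ P₂ h₁ h₂ hdisj hadj'.symm hbP₂ hb1 hbb'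
            Walk.nil Walk.IsPath.nil (by simp) (by simp [Ne.symm hbb'])
        · have hbP₁ : b ∉ P₁.support := fun hb1 => hnotboth ⟨hb1, hb2⟩
          exact twoPaths_step P₂ P₁ h₂ h₁ (fun x hx1 hx2 => hdisj x hx2 hx1) hadj'.symm hbP₁
            hb2 hbb' Walk.nil Walk.IsPath.nil (by simp) (by simp [Ne.symm hbb'])
      · push_neg at hmem
        obtain ⟨Q0, hQ0, hQ0b'⟩ := hA b' b a (Ne.symm hab) hbb' hab'
        obtain ⟨z, hSz, Qpre, hQp, hQsub, hQmin⟩ :=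
          exists_firstHit (fun x => x ∈ P₁.support ∨ x ∈ P₂.support) Q0 hQ0
            (Or.inl (Walk.start_mem_support _))
        have hQpreb' : b' ∉ Qpre.support := fun hc => hQ0b' (hQsub _ hc)
        have hzb' : z ≠ b' := fun h => hQpreb' (h ▸ Walk.end_mem_support Qpre)
        rcases hSz with hz1 | hz2
        · exact twoPaths_step P₁ P₂ h₁ h₂ hdisj hadj'.symm hmem.2 hz1 hzb' Qpre hQp
            hQmin hQpreb'
        · exact twoPaths_step P₂ P₁ h₂ h₁ (fun x hx1 hx2 => hdisj x hx2 hx1) hadj'.symm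
            hmem.1 hz2 hzb' Qpre hQp (fun x hx hS => hQmin x hx hS.symm) hQpreb'
  intro a b hab
  exact key (G.dist a b) a b hab rfl

lemma pathThroughVertex_step [DecidableEq V] {u x v z : V} (P₁ P₂ : G.Walk u x)
    (h₁ : P₁.IsPath) (h₂ : P₂.IsPath)
    (hdisj : ∀ w, w ∈ P₁.support → w ∈ P₂.support → w = u ∨ w = x)
    (hz1 : z ∈ P₁.support) (hzu : z ≠ u)
    (R : G.Walk z v) (hR : R.IsPath)
    (hRS : ∀ w ∈ R.support, (w ∈ P₁.support ∨ w ∈ P₂.support) → w = z) :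
    ∃ p : G.Walk u v, p.IsPath ∧ x ∈ p.support := by
  have hz' : z ∈ P₁.reverse.support := by
    rw [Walk.support_reverse]; exact List.mem_reverse.mpr hz1
  have hu_seg : u ∉ (P₁.reverse.takeUntil z hz').support :=
    end_not_mem_takeUntil h₁.reverse hz' hzu
  have hseg_sub : ∀ w, w ∈ (P₁.reverse.takeUntil z hz').support → w ∈ P₁.support := by
    intro w hw
    have := Walk.support_takeUntil_subset _ hz' hw
    rwa [Walk.support_reverse, List.mem_reverse] at this
  have hinner : ((P₁.reverse.takeUntil z hz').append R).IsPath := by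
    refine isPath_append_aux (h₁.reverse.takeUntil hz') hR ?_
    intro w hw1 hw2
    exact hRS w hw2 (Or.inl (hseg_sub w hw1))
  refine ⟨P₂.append ((P₁.reverse.takeUntil z hz').append R), ?_, ?_⟩
  · refine isPath_append_aux h₂ hinner ?_
    intro w hw2 hwi
    rw [Walk.support_append, List.mem_append] at hwi
    rcases hwi with hw1 | hwR
    · rcases hdisj w (hseg_sub w hw1) hw2 with h | h
      · exact absurd (h ▸ hw1) hu_seg
      · exact h
    · have hwR' : w ∈ R.support := List.mem_of_mem_tail hwR
      have hwz := hRS w hwR' (Or.inr hw2)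
      subst hwz
      rcases hdisj w hz1 hw2 with h | h
      · exact absurd h hzu
      · exact h
  · rw [Walk.support_append, List.mem_append]
    exact Or.inl (Walk.end_mem_support _)

lemma pathThroughVertex [Fintype V] (hA : AvoidConn G) (hconn : G.Connected)
    {u v x : V} (huv : u ≠ v) (hxu : x ≠ u) (hxv : x ≠ v) :
    ∃ p : G.Walk u v, p.IsPath ∧ x ∈ p.support := by
  classical
  obtain ⟨P₁, P₂, h₁, h₂, hdisj⟩ := twoPaths hA hconn u x (Ne.symm hxu)
  by_cases hv : v ∈ P₁.support ∨ v ∈ P₂.support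
  · have hnotboth : ¬(v ∈ P₁.support ∧ v ∈ P₂.support) := by
      rintro ⟨hv1, hv2⟩
      rcases hdisj v hv1 hv2 with h | h
      · exact huv h.symm
      · exact hxv h.symm
    rcases hv with hv1 | hv2
    · exact pathThroughVertex_step P₁ P₂ h₁ h₂ hdisj hv1 (Ne.symm huv) Walk.nil
        Walk.IsPath.nil (by simp)
    · exact pathThroughVertex_step P₂ P₁ h₂ h₁ (fun w hw1 hw2 => hdisj w hw2 hw1) hv2
        (Ne.symm huv) Walk.nil Walk.IsPath.nil (by simp)
  · push_neg at hv
    obtain ⟨Q0, hQ0, hQ0u⟩ := hA u v x (Ne.symm hxv) (Ne.symm huv) hxu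
    obtain ⟨z, hSz, Qpre, hQp, hQsub, hQmin⟩ :=
      exists_firstHit (fun w => w ∈ P₁.support ∨ w ∈ P₂.support) Q0 hQ0
        (Or.inl (Walk.end_mem_support _))
    have hzu : z ≠ u := fun h => hQ0u (h ▸ hQsub _ (Walk.end_mem_support Qpre))
    have hRS : ∀ w ∈ Qpre.reverse.support, (w ∈ P₁.support ∨ w ∈ P₂.support) → w = z := by
      intro w hw hS
      rw [Walk.support_reverse, List.mem_reverse] at hw
      exact hQmin w hw hS
    rcases hSz with hz1 | hz2
    · exact pathThroughVertex_step P₁ P₂ h₁ h₂ hdisj hz1 hzu Qpre.reverse hQp.reverse hRS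
    · exact pathThroughVertex_step P₂ P₁ h₂ h₁ (fun w hw1 hw2 => hdisj w hw2 hw1) hz2 hzu
        Qpre.reverse hQp.reverse (fun w hw hS => hRS w hw hS.symm)

/-- The graph `G` with the edge `xy` subdivided by a new vertex `none`. -/
def subdivE (G : SimpleGraph V) (x y : V) : SimpleGraph (Option V) where
  Adj a b :=
    match a, b with
    | some a, some b => G.Adj a b ∧ s(a, b) ≠ s(x, y)
    | some a, none => a = x ∨ a = y
    | none, some b => b = x ∨ b = y
    | none, none => False
  symm := by
    refine ⟨?_⟩
    rintro (_ | a) (_ | b) h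
    · exact h
    · exact h
    · exact h
    · exact ⟨h.1.symm, fun e => h.2 (by rwa [Sym2.eq_swap] at e)⟩
  loopless := by
    refine ⟨?_⟩
    rintro (_ | a) h
    · exact h
    · exact G.loopless.irrefl a h.1

@[simp] lemma subdivE_adj_some_some {x y a b : V} :
    (subdivE G x y).Adj (some a) (some b) ↔ G.Adj a b ∧ s(a, b) ≠ s(x, y) := Iff.rfl

@[simp] lemma subdivE_adj_some_none {x y a : V} :
    (subdivE G x y).Adj (some a) none ↔ a = x ∨ a = y := Iff.rfl

@[simp] lemma subdivE_adj_none_some {x y b : V} :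
    (subdivE G x y).Adj none (some b) ↔ b = x ∨ b = y := Iff.rfl

@[simp] lemma subdivE_adj_none_none {x y : V} :
    ¬ (subdivE G x y).Adj none none := fun h => h

lemma toSubdivE {x y : V} :
    ∀ {a b : V} (p : G.Walk a b), s(x, y) ∉ p.edges →
    ∃ q : (subdivE G x y).Walk (some a) (some b), q.support = p.support.map some
  | _, _, Walk.nil, _ => ⟨Walk.nil, by simp⟩
  | a, b, Walk.cons h p, he => by
    rw [Walk.edges_cons, List.mem_cons, not_or] at he
    obtain ⟨q, hq⟩ := toSubdivE p he.2
    exact ⟨Walk.cons (subdivE_adj_some_some.mpr ⟨h, fun e => he.1 e.symm⟩) q, by simp [hq]⟩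

lemma toSubdivE' {x y : V} :
    ∀ {a b : V} (p : G.Walk a b),
    ∃ q : (subdivE G x y).Walk (some a) (some b),
      ∀ t ∈ q.support, t = none ∨ ∃ s ∈ p.support, t = some s
  | _, _, Walk.nil => ⟨Walk.nil, by simp⟩
  | _, _, @Walk.cons _ _ a cc b h p => by
    obtain ⟨q, hq⟩ := toSubdivE' (x := x) (y := y) p
    by_cases hc : s(a, cc) = s(x, y)
    · rcases Sym2.eq_iff.mp hc with ⟨rfl, rfl⟩ | ⟨rfl, rfl⟩
      · refine ⟨Walk.cons (subdivE_adj_some_none.mpr (Or.inl rfl)) (Walk.cons (subdivE_adj_none_some.mpr (Or.inr rfl)) q), ?_⟩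
        intro t ht
        simp only [Walk.support_cons, List.mem_cons] at ht
        rcases ht with rfl | rfl | ht
        · exact Or.inr ⟨_, Walk.start_mem_support _, rfl⟩
        · exact Or.inl rfl
        · rcases hq t ht with h' | ⟨s, hs, rfl⟩
          · exact Or.inl h'
          · exact Or.inr ⟨s, by simp [hs], rfl⟩
      · refine ⟨Walk.cons (subdivE_adj_some_none.mpr (Or.inr rfl)) (Walk.cons (subdivE_adj_none_some.mpr (Or.inl rfl)) q), ?_⟩
        intro t ht
        simp only [Walk.support_cons, List.mem_cons] at ht
        rcases ht with rfl | rfl | ht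
        · exact Or.inr ⟨_, Walk.start_mem_support _, rfl⟩
        · exact Or.inl rfl
        · rcases hq t ht with h' | ⟨s, hs, rfl⟩
          · exact Or.inl h'
          · exact Or.inr ⟨s, by simp [hs], rfl⟩
    · refine ⟨Walk.cons (subdivE_adj_some_some.mpr ⟨h, hc⟩) q, ?_⟩
      intro t ht
      simp only [Walk.support_cons, List.mem_cons] at ht
      rcases ht with rfl | ht
      · exact Or.inr ⟨a, Walk.start_mem_support _, rfl⟩
      · rcases hq t ht with h' | ⟨s, hs, rfl⟩
        · exact Or.inl h'
        · exact Or.inr ⟨s, by simp [hs], rfl⟩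

lemma fromSubdivE {x y : V} {α β : Option V} (q : (subdivE G x y).Walk α β) :
    none ∉ q.support → ∀ {a b : V}, α = some a → β = some b →
    ∃ p : G.Walk a b, p.support.map some = q.support := by
  induction q with
  | nil =>
    rintro hn a b rfl hb
    obtain rfl : a = b := Option.some.inj hb
    exact ⟨Walk.nil, by simp⟩
  | @cons α γ β h q ih =>
    rintro hn a b rfl hb
    rw [Walk.support_cons, List.mem_cons, not_or] at hn
    match γ, h, q, ih, hn with
    | none, h', q, ih, hn => exact absurd (Walk.start_mem_support q) hn.2
    | some cc, h', q, ih, hn => 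
      obtain ⟨p, hp⟩ := ih hn.2 rfl hb
      exact ⟨Walk.cons h'.1 p, by simp [hp]⟩
lemma walk_avoid_edge {x y : V} (D : G.Walk x y) (hD : s(x, y) ∉ D.edges) :
    ∀ {a b : V}, G.Walk a b → ∃ q : G.Walk a b, s(x, y) ∉ q.edges
  | _, _, Walk.nil => ⟨Walk.nil, by simp⟩
  | _, _, @Walk.cons _ _ a cc b h p => by
    obtain ⟨q, hq⟩ := walk_avoid_edge D hD p
    by_cases hc : s(a, cc) = s(x, y)
    · rcases Sym2.eq_iff.mp hc with ⟨rfl, rfl⟩ | ⟨rfl, rfl⟩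
      · exact ⟨D.append q, by rw [Walk.edges_append, List.mem_append]; tauto⟩
      · refine ⟨D.reverse.append q, ?_⟩
        rw [Walk.edges_append, List.mem_append, Walk.edges_reverse, List.mem_reverse]
        tauto
    · refine ⟨Walk.cons h q, ?_⟩
      rw [Walk.edges_cons, List.mem_cons]
      rintro (h' | h')
      · exact hc h'.symm
      · exact hq h'

lemma subdivE_walk_to_none [Fintype V] (hA : AvoidConn G) (hcard : 3 ≤ Fintype.card V)
    {x y : V} (hxy : G.Adj x y) {a c : V} (hac : a ≠ c) :
    ∃ q : (subdivE G x y).Walk (some a) none, some c ∉ q.support := by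
  classical
  have hxyne : x ≠ y := hxy.ne
  obtain ⟨t₀, ht₀mem, ht₀c⟩ : ∃ t₀, (t₀ = x ∨ t₀ = y) ∧ t₀ ≠ c := by
    by_cases hx : x = c
    · exact ⟨y, Or.inr rfl, fun h => hxyne (hx ▸ h ▸ rfl)⟩
    · exact ⟨x, Or.inl rfl, hx⟩
  by_cases hat : a = t₀
  · subst hat
    refine ⟨Walk.cons (subdivE_adj_some_none.mpr ht₀mem) Walk.nil, fun hmem => ?_⟩
    simp only [Walk.support_cons, Walk.support_nil, List.mem_cons, List.mem_singleton] at hmem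
    rcases hmem with h | h
    · exact ht₀c (Option.some.inj h).symm
    · simp at h
  · obtain ⟨P, _, hPc⟩ := hA c a t₀ hat hac ht₀c
    obtain ⟨q₀, hq₀⟩ := toSubdivE' (x := x) (y := y) P
    refine ⟨q₀.append (Walk.cons (subdivE_adj_some_none.mpr ht₀mem) Walk.nil), ?_⟩
    rw [Walk.support_append, List.mem_append]
    rintro (h | h)
    · rcases hq₀ _ h with h' | ⟨s, hs, h'⟩
      · exact (by simp at h' : False)
      · exact hPc (by rw [Option.some.inj h']; exact hs)
    · simp at h

lemma avoidConn_subdivE [Fintype V] (hA : AvoidConn G) (hconn : G.Connected)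
    (hcard : 3 ≤ Fintype.card V) {x y : V} (hxy : G.Adj x y) :
    AvoidConn (subdivE G x y) := by
  classical
  intro w uu vv huv huw hvw
  suffices h : ∃ p : (subdivE G x y).Walk uu vv, w ∉ p.support by
    obtain ⟨p, hp⟩ := h
    exact ⟨p.bypass, p.bypass_isPath, fun hw => hp (p.support_bypass_subset hw)⟩
  cases w with
  | none =>
    obtain ⟨a, rfl⟩ := Option.ne_none_iff_exists'.mp huw
    obtain ⟨b, rfl⟩ := Option.ne_none_iff_exists'.mp hvw
    have hab : a ≠ b := fun h => huv (by rw [h])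
    obtain ⟨w0, hw0x, hw0y⟩ := exists_ne_ne hcard x y
    obtain ⟨D₁, _, hD₁⟩ := hA y x w0 (fun h => hw0x h.symm) hxy.ne hw0y
    obtain ⟨D₂, _, hD₂⟩ := hA x w0 y hw0y hw0x hxy.ne'
    have hD : s(x, y) ∉ (D₁.append D₂).edges := by
      rw [Walk.edges_append, List.mem_append]
      rintro (h | h)
      · exact hD₁ (Walk.snd_mem_support_of_mem_edges D₁ h)
      · exact hD₂ (Walk.fst_mem_support_of_mem_edges D₂ h)
    obtain ⟨p0⟩ := hconn a b
    obtain ⟨p1, hp1⟩ := walk_avoid_edge (D₁.append D₂) hD p0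
    obtain ⟨q, hq⟩ := toSubdivE p1 hp1
    refine ⟨q, ?_⟩
    rw [hq]
    simp
  | some c =>
    cases uu with
    | none =>
      obtain ⟨b, rfl⟩ := Option.ne_none_iff_exists'.mp (Ne.symm huv)
      have hbc : b ≠ c := fun h => hvw (by rw [h])
      obtain ⟨q, hq⟩ := subdivE_walk_to_none hA hcard hxy hbc
      refine ⟨q.reverse, fun hmem => hq ?_⟩
      rwa [Walk.support_reverse, List.mem_reverse] at hmem
    | some a =>
      cases vv with
      | none =>
        have hac : a ≠ c := fun h => huw (by rw [h])
        obtain ⟨q, hq⟩ := subdivE_walk_to_none hA hcard hxy hac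
        exact ⟨q, hq⟩
      | some b =>
        have hab : a ≠ b := fun h => huv (by rw [h])
        have hac : a ≠ c := fun h => huw (by rw [h])
        have hbc : b ≠ c := fun h => hvw (by rw [h])
        obtain ⟨P, _, hPc⟩ := hA c a b hab hac hbc
        obtain ⟨q, hq⟩ := toSubdivE' (x := x) (y := y) P
        refine ⟨q, fun hmem => ?_⟩
        rcases hq _ hmem with h' | ⟨s, hs, h'⟩
        · simp at h'
        · exact hPc (by rwa [← Option.some.inj h'] at hs)

lemma path_through_edge [Fintype V] (hA : AvoidConn G) (hconn : G.Connected)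
    (hcard : 3 ≤ Fintype.card V) {x y : V} (hxy : G.Adj x y) :
    ∀ u v : V, u ≠ v → ∃ p : G.Walk u v, p.IsPath ∧ s(x, y) ∈ p.edges := by
  classical
  have baseX : ∀ x' y' : V, G.Adj x' y' → ∀ v : V, v ≠ x' →
      ∃ p : G.Walk x' v, p.IsPath ∧ s(x', y') ∈ p.edges := by
    intro x' y' hxy' v hvx
    by_cases hv : v = y'
    · subst hv
      refine ⟨Walk.cons hxy' Walk.nil, ?_, by simp⟩
      rw [Walk.cons_isPath_iff]
      exact ⟨Walk.IsPath.nil, by simp [hxy'.ne]⟩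
    · obtain ⟨P, hP, hPx⟩ := hA x' y' v (fun hh => hv hh.symm) hxy'.ne' hvx
      refine ⟨Walk.cons hxy' P, ?_, by simp⟩
      rw [Walk.cons_isPath_iff]
      exact ⟨hP, hPx⟩
  have base : ∀ u v : V, u ≠ v → (u = x ∨ u = y) →
      ∃ p : G.Walk u v, p.IsPath ∧ s(x, y) ∈ p.edges := by
    rintro u v huv hu
    rcases hu with h | h
    · subst h
      exact baseX u y hxy v (Ne.symm huv)
    · subst h
      obtain ⟨p, hp, hpe⟩ := baseX u x hxy.symm v (Ne.symm huv)
      exact ⟨p, hp, by rwa [Sym2.eq_swap] at hpe⟩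
  intro u v huv
  by_cases hu : u = x ∨ u = y
  · exact base u v huv hu
  · by_cases hv : v = x ∨ v = y
    · obtain ⟨p, hp, hpe⟩ := base v u (Ne.symm huv) hv
      refine ⟨p.reverse, hp.reverse, ?_⟩
      rw [Walk.edges_reverse, List.mem_reverse]
      exact hpe
    · push_neg at hu hv
      set H := subdivE G x y with hHdef
      have hAH : AvoidConn H := avoidConn_subdivE hA hconn hcard hxy
      have hconnH : H.Connected := by
        refine connected_of_avoidConn hAH ?_
        rw [Fintype.card_option]
        omega
      obtain ⟨W, hW, hWn⟩ := pathThroughVertex hAH hconnH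
        (u := some u) (v := some v) (x := (none : Option V))
        (by simpa using huv) (by simp) (by simp)
      have hWspec := W.take_spec hWn
      set A := W.takeUntil none hWn with hAdef
      set B := W.dropUntil none hWn with hBdef
      have hApath : A.IsPath := hW.takeUntil hWn
      have hBpath : B.IsPath := hW.dropUntil hWn
      obtain ⟨γ, hγadj, qA, hqA⟩ :=
        Walk.exists_eq_cons_of_ne (show (none : Option V) ≠ some u by simp) A.reverse
      obtain ⟨δ, hδadj, qB, hqB⟩ :=
        Walk.exists_eq_cons_of_ne (show (none : Option V) ≠ some v by simp) B
      have hArev : A.reverse.IsPath := hApath.reverse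
      rw [hqA, Walk.cons_isPath_iff] at hArev
      rw [hqB, Walk.cons_isPath_iff] at hBpath
      -- γ and δ are `some`
      match γ, hγadj, qA, hqA, hArev with
      | none, hγadj, _, _, _ => exact absurd hγadj (subdivE_adj_none_none)
      | some t, hγadj, qA, hqA, hArev =>
      match δ, hδadj, qB, hqB, hBpath with
      | none, hδadj, _, _, _ => exact absurd hδadj (subdivE_adj_none_none)
      | some s₀, hδadj, qB, hqB, hBpath =>
      have ht : t = x ∨ t = y := subdivE_adj_none_some.mp hγadj
      have hs₀ : s₀ = x ∨ s₀ = y := subdivE_adj_none_some.mp hδadj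
      obtain ⟨p₁, hp₁⟩ := fromSubdivE qA hArev.2 rfl rfl
      obtain ⟨p₂, hp₂⟩ := fromSubdivE qB hBpath.2 rfl rfl
      -- disjointness of the two halves
      have hWnd := hW.support_nodup
      rw [← hWspec, Walk.support_append] at hWnd
      have hqA_subA : ∀ e, e ∈ qA.support → e ∈ A.support := by
        intro e he
        have h1 : e ∈ A.reverse.support := by
          rw [hqA, Walk.support_cons]
          exact List.mem_cons_of_mem _ he
        rwa [Walk.support_reverse, List.mem_reverse] at h1
      have hqB_subB : ∀ e, e ∈ qB.support → e ∈ B.support.tail := by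
        intro e he
        rw [hqB, Walk.support_cons]
        exact he
      have hdisjAB : ∀ e, e ∈ qA.support → e ∈ qB.support → False := by
        intro e h1 h2
        exact List.disjoint_of_nodup_append hWnd (hqA_subA e h1) (hqB_subB e h2)
      have hts : t ≠ s₀ := by
        rintro rfl
        exact hdisjAB (some t) (Walk.start_mem_support qA) (Walk.start_mem_support qB)
      have hadj_ts : G.Adj t s₀ ∧ s(t, s₀) = s(x, y) := by
        rcases ht with rfl | rfl <;> rcases hs₀ with rfl | rfl
        · exact absurd rfl hts
        · exact ⟨hxy, rfl⟩
        · exact ⟨hxy.symm, Sym2.eq_swap⟩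
        · exact absurd rfl hts
      refine ⟨p₁.reverse.append (Walk.cons hadj_ts.1 p₂), ?_, ?_⟩
      · rw [Walk.isPath_def, Walk.support_append, Walk.support_cons, List.tail_cons]
        have hnd₁ : p₁.support.Nodup := by
          have := hArev.1.support_nodup
          rw [← hp₁] at this
          exact this.of_map _
        have hnd₂ : p₂.support.Nodup := by
          have := hBpath.1.support_nodup
          rw [← hp₂] at this
          exact this.of_map _
        refine List.Nodup.append ?_ hnd₂ ?_
        · rw [Walk.support_reverse]
          exact List.nodup_reverse.mpr hnd₁
        · intro e he1 he2
          rw [Walk.support_reverse, List.mem_reverse] at he1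
          refine hdisjAB (some e) ?_ ?_
          · rw [← hp₁]
            exact List.mem_map_of_mem he1
          · rw [← hp₂]
            exact List.mem_map_of_mem he2
      · rw [Walk.edges_append, List.mem_append, Walk.edges_cons]
        exact Or.inr (List.mem_cons.mpr (Or.inl hadj_ts.2.symm))

lemma count_map_indicator {α : Type*} [DecidableEq α] (e₀ : α) (l : List α) :
    (l.map (fun e => if e = e₀ then (0 : ℕ) else 1)).count 0 = l.count e₀ := by
  induction l with
  | nil => simp
  | cons a l ih =>
    by_cases h : a = e₀
    · subst h
      simp [List.count_cons, ih]
    · simp [List.count_cons, h, ih]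

end CFCAux

/-- A noncomplete 2-connected graph has cfc equal to 2. -/
theorem stmt_3 {V : Type u} [Fintype V] (G : SimpleGraph V) (hnc : G ≠ ⊤)
    (hcard : 3 ≤ Fintype.card V)
    (h2c : ∀ v : V, (G.induce {w | w ≠ v}).Connected) :
    cfcNum G = 2 := by
  classical
  have hA : AvoidConn G := avoidConn_of_h2c h2c
  have hconn : G.Connected := connected_of_avoidConn hA hcard
  obtain ⟨a₀, b₀, hab₀, hnab₀⟩ : ∃ a b : V, a ≠ b ∧ ¬G.Adj a b := by
    by_contra h
    push_neg at h
    refine hnc ?_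
    ext a b
    simp only [top_adj]
    exact ⟨fun hadj => hadj.ne, fun hne => h a b hne⟩
  obtain ⟨p0⟩ := hconn a₀ b₀
  obtain ⟨x0, hxy0, q0, -⟩ := Walk.exists_eq_cons_of_ne hab₀ p0
  have h2S : 2 ∈ {n : ℕ | ∃ c : Sym2 V → ℕ,
      (∀ e ∈ G.edgeSet, c e < n) ∧ IsCFCColoring G c} := by
    refine ⟨fun e => if e = s(a₀, x0) then 0 else 1, fun e _ => ?_, ?_⟩
    · by_cases h : e = s(a₀, x0) <;> simp [h]
    · intro u v huv
      obtain ⟨p, hp, hpe⟩ := path_through_edge hA hconn hcard hxy0 u v huv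
      refine ⟨p, hp, 0, ?_⟩
      rw [count_map_indicator]
      exact List.count_eq_one_of_mem (Walk.edges_nodup_of_support_nodup hp.support_nodup) hpe
  have hSne : {n : ℕ | ∃ c : Sym2 V → ℕ,
      (∀ e ∈ G.edgeSet, c e < n) ∧ IsCFCColoring G c}.Nonempty := ⟨2, h2S⟩
  have hle : cfcNum G ≤ 2 := Nat.sInf_le h2S
  obtain ⟨c', hlt, hcfc⟩ := Nat.sInf_mem hSne
  have h0 : cfcNum G ≠ 0 := by
    intro h0
    have h' : c' s(a₀, x0) < cfcNum G := hlt _ hxy0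
    omega
  have h1 : cfcNum G ≠ 1 := by
    intro h1
    obtain ⟨p, hp, col, hcount⟩ := hcfc a₀ b₀ hab₀
    have hall : ∀ e ∈ p.edges, c' e = 0 := by
      intro e he
      have h' : c' e < cfcNum G := hlt _ (Walk.edges_subset_edgeSet p he)
      omega
    have hlen : 2 ≤ p.length := by
      obtain ⟨w', hadj, q, rfl⟩ := Walk.exists_eq_cons_of_ne hab₀ p
      have hq : q.length ≠ 0 := by
        intro hq0
        exact hnab₀ ((Walk.eq_of_length_eq_zero hq0) ▸ hadj)
      rw [Walk.length_cons]
      omega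
    have hrep : p.edges.map c' = List.replicate p.length 0 := by
      rw [List.eq_replicate_iff]
      refine ⟨by rw [List.length_map, Walk.length_edges], ?_⟩
      rintro b hb
      obtain ⟨e, he, rfl⟩ := List.mem_map.mp hb
      exact hall e he
    rw [hrep] at hcount
    by_cases hcol : col = 0
    · subst hcol
      rw [List.count_replicate] at hcount
      simp at hcount
      omega
    · rw [List.count_replicate] at hcount
      simp [Ne.symm hcol] at hcount
  omega
end

section
/- If G is a noncomplete 2-edge-connected graph, then cfc(G) = 2. -/
open SimpleGraph

universe u

section CFCAux

variable {V : Type u}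

lemma reachable_deleteEdge_of_reachable' {G : SimpleGraph V} {a b : V}
    (hr : (G.deleteEdges {s(a,b)}).Reachable a b) {u v : V} (h : G.Reachable u v) :
    (G.deleteEdges {s(a,b)}).Reachable u v := by
  obtain ⟨p⟩ := h
  induction p with
  | nil => exact Reachable.refl _
  | @cons x y z h' p ih =>
    by_cases hef : s(x,y) = s(a,b)
    · rw [Sym2.eq_iff] at hef
      rcases hef with ⟨rfl, rfl⟩ | ⟨rfl, rfl⟩
      · exact hr.trans ih
      · exact hr.symm.trans ih
    · exact ((SimpleGraph.deleteEdges_adj.mpr ⟨h', by simp [hef]⟩).reachable).trans ih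

lemma exists_spanning_acyclic' [Fintype V] :
    ∀ (n : ℕ) (G : SimpleGraph V), G.edgeSet.ncard = n → G.Connected →
      ∃ T : SimpleGraph V, T ≤ G ∧ T.Connected ∧ T.IsAcyclic := by
  intro n
  induction n using Nat.strong_induction_on with
  | _ n ih =>
    intro G hn hc
    by_cases ha : G.IsAcyclic
    · exact ⟨G, le_refl G, hc, ha⟩
    · rw [isAcyclic_iff_forall_edge_isBridge] at ha
      push_neg at ha
      obtain ⟨e, he, hbr⟩ := ha
      induction e using Sym2.ind with
      | _ a b =>
      have hab : G.Adj a b := he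
      rw [isBridge_iff] at hbr
      push_neg at hbr
      have hr : (G.deleteEdges {s(a,b)}).Reachable a b := hbr
      set G' := G.deleteEdges {s(a,b)} with hG'
      have hsub : G'.edgeSet ⊆ G.edgeSet := by
        rw [hG', edgeSet_deleteEdges]; exact Set.diff_subset
      have hne : s(a,b) ∉ G'.edgeSet := by
        rw [hG', edgeSet_deleteEdges]; simp
      have hss : G'.edgeSet ⊂ G.edgeSet := ⟨hsub, fun hts => hne (hts he)⟩
      have hlt : G'.edgeSet.ncard < n := by
        rw [← hn]; exact Set.ncard_lt_ncard hss (Set.toFinite _)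
      have hc' : G'.Connected := by
        rw [connected_iff]
        exact ⟨fun u v => reachable_deleteEdge_of_reachable' hr (hc.preconnected u v),
          hc.nonempty⟩
      obtain ⟨T, hT1, hT2, hT3⟩ := ih _ hlt G' rfl hc'
      exact ⟨T, hT1.trans (SimpleGraph.deleteEdges_le _), hT2, hT3⟩

lemma reachable_of_mem_support' {H : SimpleGraph V} {a b z : V} (p : H.Walk a b)
    (hz : z ∈ p.support) : H.Reachable a z := by
  classical
  exact ⟨p.takeUntil z hz⟩

lemma exists_boundary_edge' {H : SimpleGraph V} (Q : V → Prop) {u w : V} (W : H.Walk u w) :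
    Q u → ¬ Q w → ∃ x y, H.Adj x y ∧ Q x ∧ ¬ Q y := by
  induction W with
  | nil => intro hu hw; exact absurd hu hw
  | @cons x y z h p ih =>
    intro hu hw
    by_cases hb : Q y
    · exact ih hb hw
    · exact ⟨x, y, h, hu, hb⟩

lemma two_components' {T : SimpleGraph V} {u w : V} (h : T.Adj u w) :
    ∀ {a z : V}, T.Walk a z →
      ((T.deleteEdges {s(u,w)}).Reachable u a ∨ (T.deleteEdges {s(u,w)}).Reachable w a) →
      ((T.deleteEdges {s(u,w)}).Reachable u z ∨ (T.deleteEdges {s(u,w)}).Reachable w z) := by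
  intro a z p
  induction p with
  | nil => exact id
  | @cons a b z h' p ih =>
    intro ha
    apply ih
    by_cases hef : s(a,b) = s(u,w)
    · rw [Sym2.eq_iff] at hef
      rcases hef with ⟨rfl, rfl⟩ | ⟨rfl, rfl⟩
      · exact Or.inr (Reachable.refl _)
      · exact Or.inl (Reachable.refl _)
    · have hadj : (T.deleteEdges {s(u,w)}).Adj a b :=
        SimpleGraph.deleteEdges_adj.mpr ⟨h', by simp [hef]⟩
      rcases ha with ha | ha
      · exact Or.inl (ha.trans hadj.reachable)
      · exact Or.inr (ha.trans hadj.reachable)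

lemma cfc_coloring_of_tree' {G T : SimpleGraph V} (hTG : T ≤ G)
    (hTconn : T.Connected) (hTacyc : T.IsAcyclic)
    (hbridge : ∀ e ∈ G.edgeSet, ¬ G.IsBridge e)
    (c : Sym2 V → ℕ) (hcT : ∀ f ∈ T.edgeSet, c f = 1)
    (hcN : ∀ f, f ∉ T.edgeSet → c f = 0) :
    IsCFCColoring G c := by
  classical
  intro u v huv
  obtain ⟨p0⟩ := hTconn.preconnected u v
  obtain ⟨p, hp⟩ := p0.toPath
  cases p with
  | nil => exact absurd rfl huv
  | @cons _ w _ h q =>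
    rw [Walk.cons_isPath_iff] at hp
    obtain ⟨hq, hus⟩ := hp
    set T' := T.deleteEdges {s(u,w)} with hT'def
    have hbrT : T.IsBridge s(u,w) := (isAcyclic_iff_forall_adj_isBridge.mp hTacyc) h
    have huw : ¬ T'.Reachable u w := isBridge_iff.mp hbrT
    have hqT' : ∀ f ∈ q.edges, f ∈ T'.edgeSet := by
      intro f hf
      rw [hT'def, edgeSet_deleteEdges]
      refine ⟨q.edges_subset_edgeSet hf, ?_⟩
      simp only [Set.mem_singleton_iff]
      rintro rfl
      exact hus (q.fst_mem_support_of_mem_edges hf)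
    have hwv : T'.Reachable w v := ⟨q.transfer T' hqT'⟩
    have heG : G.Adj u w := hTG h
    have hnbr := hbridge s(u,w) heG
    rw [isBridge_iff] at hnbr
    push_neg at hnbr
    obtain ⟨W0⟩ : (G.deleteEdges {s(u,w)}).Reachable u w := hnbr
    obtain ⟨x, y, hxy, hx, hy⟩ :=
      exists_boundary_edge' (fun z => T'.Reachable u z) W0 (Reachable.refl u) huw
    rw [SimpleGraph.deleteEdges_adj] at hxy
    obtain ⟨hxyG, hxyne⟩ := hxy
    have hwy : T'.Reachable w y := by
      obtain ⟨py⟩ := hTconn.preconnected u y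
      rcases two_components' h py (Or.inl (Reachable.refl u)) with h' | h'
      · exact absurd h' hy
      · exact h'
    have hyv : T'.Reachable y v := hwy.symm.trans hwv
    obtain ⟨W1⟩ := id hx
    obtain ⟨W2⟩ := hyv
    obtain ⟨P1, hP1⟩ := W1.toPath
    obtain ⟨P2, hP2⟩ := W2.toPath
    have hT'G : T' ≤ G := (SimpleGraph.deleteEdges_le _).trans hTG
    have hsub : T'.edgeSet ⊆ G.edgeSet := edgeSet_mono hT'G
    set Q1 : G.Walk u x := P1.transfer G (fun f hf => hsub (P1.edges_subset_edgeSet hf)) with hQ1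
    set Q2 : G.Walk y v := P2.transfer G (fun f hf => hsub (P2.edges_subset_edgeSet hf)) with hQ2
    have hsup1 : ∀ z ∈ P1.support, T'.Reachable u z := fun z hz => reachable_of_mem_support' P1 hz
    have hsup2 : ∀ z ∈ P2.support, ¬ T'.Reachable u z := fun z hz hz' =>
      hy (hz'.trans (reachable_of_mem_support' P2 hz).symm)
    refine ⟨Q1.append (Walk.cons hxyG Q2), ?_, 0, ?_⟩
    · rw [Walk.isPath_def, Walk.support_append, Walk.support_cons, List.tail_cons]
      apply List.Nodup.append
      · rw [hQ1, Walk.support_transfer]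
        exact hP1.support_nodup
      · rw [hQ2, Walk.support_transfer]
        exact hP2.support_nodup
      · intro z hz1 hz2
        rw [hQ1, Walk.support_transfer] at hz1
        rw [hQ2, Walk.support_transfer] at hz2
        exact hsup2 z hz2 (hsup1 z hz1)
    · have hone1 : ∀ f ∈ Q1.edges, c f = 1 := by
        intro f hf
        rw [hQ1, Walk.edges_transfer] at hf
        apply hcT
        have hfT' := P1.edges_subset_edgeSet hf
        rw [hT'def, edgeSet_deleteEdges] at hfT'
        exact hfT'.1
      have hone2 : ∀ f ∈ Q2.edges, c f = 1 := by
        intro f hf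
        rw [hQ2, Walk.edges_transfer] at hf
        apply hcT
        have hfT' := P2.edges_subset_edgeSet hf
        rw [hT'def, edgeSet_deleteEdges] at hfT'
        exact hfT'.1
      have hzero : c s(x,y) = 0 := by
        apply hcN
        intro hmem
        have hT'xy : T'.Adj x y := by
          rw [hT'def]
          exact SimpleGraph.deleteEdges_adj.mpr ⟨hmem, hxyne⟩
        exact hy (hx.trans hT'xy.reachable)
      rw [Walk.edges_append, Walk.edges_cons, List.map_append, List.map_cons,
        List.count_append, List.count_cons]
      have hc1 : ((Q1.edges.map c).count 0) = 0 := by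
        rw [List.count_eq_zero]
        intro hmem
        obtain ⟨f, hf, hf0⟩ := List.mem_map.mp hmem
        rw [hone1 f hf] at hf0
        exact one_ne_zero hf0
      have hc2 : ((Q2.edges.map c).count 0) = 0 := by
        rw [List.count_eq_zero]
        intro hmem
        obtain ⟨f, hf, hf0⟩ := List.mem_map.mp hmem
        rw [hone2 f hf] at hf0
        exact one_ne_zero hf0
      rw [hc1, hc2, hzero]
      simp

end CFCAux

/-- A noncomplete 2-edge-connected graph has cfc equal to 2. -/
theorem stmt_4 {V : Type u} [Fintype V] (G : SimpleGraph V) (hnc : G ≠ ⊤)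
    (hconn : G.Connected) (hnt : Nontrivial V)
    (hbridge : ∀ e ∈ G.edgeSet, ¬ G.IsBridge e) :
    cfcNum G = 2 := by
  classical
  obtain ⟨T, hTG, hTconn, hTacyc⟩ := exists_spanning_acyclic' (G.edgeSet.ncard) G rfl hconn
  set c : Sym2 V → ℕ := fun f => if f ∈ T.edgeSet then 1 else 0 with hcdef
  have hcol : IsCFCColoring G c :=
    cfc_coloring_of_tree' hTG hTconn hTacyc hbridge c
      (fun f hf => by rw [hcdef]; exact if_pos hf)
      (fun f hf => by rw [hcdef]; exact if_neg hf)
  have h2 : 2 ∈ {n : ℕ | ∃ c : Sym2 V → ℕ, (∀ e ∈ G.edgeSet, c e < n) ∧ IsCFCColoring G c} :=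
    ⟨c, fun e _ => by rw [hcdef]; dsimp only; split <;> omega, hcol⟩
  apply le_antisymm
  · exact Nat.sInf_le h2
  · apply le_csInf ⟨2, h2⟩
    rintro n ⟨c', hc', hcfc⟩
    by_contra hlt
    push_neg at hlt
    obtain ⟨a, b, hab⟩ : ∃ a b : V, G.Adj a b := by
      obtain ⟨a, b, hne⟩ := hnt.exists_pair_ne
      obtain ⟨p⟩ := hconn.preconnected a b
      cases p with
      | nil => exact absurd rfl hne
      | cons h _ => exact ⟨_, _, h⟩
    have h1 : c' s(a,b) < n := hc' _ hab
    obtain ⟨u, v, huv, hnadj⟩ : ∃ u v : V, u ≠ v ∧ ¬ G.Adj u v := by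
      by_contra hall
      push_neg at hall
      apply hnc
      ext u v
      simp only [top_adj]
      exact ⟨fun h => h.ne, fun h => hall u v h⟩
    obtain ⟨p, hp, color, hcount⟩ := hcfc u v huv
    have hall0 : ∀ f ∈ p.edges, c' f = 0 := by
      intro f hf
      have := hc' f (p.edges_subset_edgeSet hf)
      omega
    have hrep : p.edges.map c' = List.replicate (p.edges.map c').length 0 := by
      apply List.eq_replicate_of_mem
      intro z hz
      obtain ⟨f, hf, rfl⟩ := List.mem_map.mp hz
      exact hall0 f hf
    have hlen1 : p.length ≠ 1 := by
      intro hl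
      cases p with
      | nil => simp at hl
      | cons h rest =>
        cases rest with
        | nil => exact hnadj h
        | cons h' rest' => simp [Walk.length_cons] at hl
    rw [hrep, List.count_replicate] at hcount
    by_cases hco : (0 == color) = true
    · rw [if_pos hco] at hcount
      rw [List.length_map, Walk.length_edges] at hcount
      exact hlen1 hcount
    · rw [if_neg hco] at hcount
      exact absurd hcount (by omega)
end

section
/- Let u and v be two distinct vertices and let e be an edge of a 2-connected graph G. Then there is a path in G from u to v that contains the edge e. -/
open SimpleGraph

universe u

namespace CFCAux25
set_option linter.unusedSectionVars false
variable {V : Type u} [Fintype V] {G : SimpleGraph V}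

/-- split facts for a path -/
lemma split_unique [DecidableEq V] {a b z : V} {p : G.Walk a b} (hp : p.IsPath)
    (hz : z ∈ p.support) :
    ∀ w, w ∈ (p.takeUntil z hz).support → w ∈ (p.dropUntil z hz).support → w = z := by
  have hsplit : p.support = (p.takeUntil z hz).support ++ (p.dropUntil z hz).support.tail := by
    conv_lhs => rw [← Walk.take_spec p hz]
    rw [Walk.support_append]
  have hnd := hp.support_nodup
  rw [hsplit, List.nodup_append'] at hnd
  intro w hw1 hw2
  rw [Walk.support_eq_cons (p.dropUntil z hz)] at hw2
  rcases List.mem_cons.mp hw2 with hw2 | hw2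
  · exact hw2
  · exact absurd hw2 (hnd.2.2 hw1)

lemma start_not_mem_tail {a b : V} {p : G.Walk a b} (h : p.support.Nodup) :
    a ∉ p.support.tail := by
  rw [Walk.support_eq_cons] at h
  exact (List.nodup_cons.mp h).1


section
variable (hcard : 3 ≤ Fintype.card V) (h2c : ∀ v : V, (G.induce {w | w ≠ v}).Connected)
include hcard

lemma exists_third (a b : V) : ∃ w : V, w ≠ a ∧ w ≠ b := by
  obtain ⟨x, y, z, hxy, hxz, hyz⟩ := Fintype.two_lt_card_iff (α := V) |>.mp (by omega)
  rcases Classical.em (x = a ∨ x = b) with (rfl | rfl) | hx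
  · rcases Classical.em (y = b) with rfl | h
    · exact ⟨z, Ne.symm hxz, Ne.symm hyz⟩
    · exact ⟨y, Ne.symm hxy, h⟩
  · rcases Classical.em (y = a) with rfl | h
    · exact ⟨z, hyz.symm, Ne.symm hxz⟩
    · exact ⟨y, h, Ne.symm hxy⟩
  · exact ⟨x, fun h => hx (Or.inl h), fun h => hx (Or.inr h)⟩

include h2c

lemma avoid_vertex [DecidableEq V] (w : V) {a b : V} (ha : a ≠ w) (hb : b ≠ w) :
    ∃ P : G.Walk a b, P.IsPath ∧ ∀ c ∈ P.support, c ≠ w := by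
  have hr := (h2c w).preconnected ⟨a, ha⟩ ⟨b, hb⟩
  obtain ⟨W⟩ := hr
  let f : G.induce {z | z ≠ w} →g G := ⟨Subtype.val, fun h => h⟩
  let W' : G.Walk a b := W.map f
  refine ⟨W'.bypass, W'.bypass_isPath, fun c hc => ?_⟩
  have hc' : c ∈ W'.support := W'.support_bypass_subset hc
  rw [Walk.support_map] at hc'
  obtain ⟨⟨d, hd⟩, _, rfl⟩ := List.mem_map.mp hc'
  exact hd

lemma reach [DecidableEq V] (a b : V) : G.Reachable a b := by
  rcases Classical.em (a = b) with rfl | hab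
  · rfl
  obtain ⟨w, hwa, hwb⟩ := exists_third hcard a b
  obtain ⟨P, _, _⟩ := avoid_vertex hcard h2c w (Ne.symm hwa) (Ne.symm hwb)
  exact ⟨P⟩

lemma path_between [DecidableEq V] (a b : V) : ∃ P : G.Walk a b, P.IsPath := by
  obtain ⟨W⟩ := reach hcard h2c a b
  exact ⟨W.bypass, W.bypass_isPath⟩

end

section
variable (hcard : 3 ≤ Fintype.card V) (h2c : ∀ v : V, (G.induce {w | w ≠ v}).Connected)
include hcard h2c

lemma exists_adj_ne (x y : V) (hxy : x ≠ y) : ∃ z, G.Adj x z ∧ z ≠ y := by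
  obtain ⟨w, hwx, hwy⟩ := exists_third hcard x y
  have hr := (h2c y).preconnected ⟨x, hxy⟩ ⟨w, hwy⟩
  obtain ⟨W⟩ := hr
  have hne : (⟨x, hxy⟩ : {z : V | z ≠ y}) ≠ ⟨w, hwy⟩ := by
    simp [Ne.symm hwx]
  obtain ⟨b, hadj, -, -⟩ := Walk.not_nil_iff.mp (Walk.not_nil_of_ne (p := W) hne)
  have : G.Adj x b.val := hadj
  exact ⟨b.val, this, b.property⟩

end

lemma first_hit_aux [DecidableEq V] {S : Set V} :
    ∀ {a b : V} (P : G.Walk a b), b ∈ S →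
    ∃ (z : V) (Q : G.Walk a z), z ∈ S ∧ (∀ w ∈ Q.support, w ∈ S → w = z) ∧
      ∀ w ∈ Q.support, w ∈ P.support := by
  intro a b P hb
  induction P with
  | nil => exact ⟨_, Walk.nil, hb, by simp, by simp⟩
  | @cons a c b h P ih =>
    rcases Classical.em (a ∈ S) with ha | ha
    · exact ⟨a, Walk.nil, ha, by simp, by simp⟩
    · obtain ⟨z, Q, hz, hQ, hsub⟩ := ih hb
      refine ⟨z, Walk.cons h Q, hz, ?_, ?_⟩
      · intro w hw hwS
        rw [Walk.support_cons] at hw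
        rcases List.mem_cons.mp hw with rfl | hw
        · exact absurd hwS ha
        · exact hQ w hw hwS
      · intro w hw
        rw [Walk.support_cons] at hw ⊢
        rcases List.mem_cons.mp hw with rfl | hw
        · exact List.mem_cons_self
        · exact List.mem_cons_of_mem _ (hsub w hw)

lemma first_hit [DecidableEq V] {S : Set V} {a b : V} (P : G.Walk a b) (hb : b ∈ S) :
    ∃ (z : V) (Q : G.Walk a z), Q.IsPath ∧ z ∈ S ∧ (∀ w ∈ Q.support, w ∈ S → w = z) ∧
      ∀ w ∈ Q.support, w ∈ P.support := by
  obtain ⟨z, Q, hz, hQ, hsub⟩ := first_hit_aux P hb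
  exact ⟨z, Q.bypass, Q.bypass_isPath, hz,
    fun w hw hwS => hQ w (Q.support_bypass_subset hw) hwS,
    fun w hw => hsub w (Q.support_bypass_subset hw)⟩

lemma through_edge [DecidableEq V] {x y v z : V} (hxy : G.Adj x y)
    (p : G.Walk v x) (q : G.Walk y v) (hp : p.IsPath) (hq : q.IsPath)
    (hpq : ∀ a, a ∈ p.support → a ∈ q.support → a = v)
    (hz : z ∈ p.support ∨ z ∈ q.support) (hzv : z ≠ v) :
    ∃ W : G.Walk z v, W.IsPath ∧ s(x, y) ∈ W.edges ∧
      ∀ w ∈ W.support, w ∈ p.support ∨ w ∈ q.support := by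
  rcases hz with hz1 | hz2
  · have K1 := split_unique hp hz1
    set A := p.dropUntil z hz1 with hA
    have hApath : A.IsPath := hp.dropUntil hz1
    have hAsub : A.support ⊆ p.support := Walk.support_dropUntil_subset p hz1
    have hvA : v ∉ A.support := fun hv =>
      hzv (K1 v (Walk.start_mem_support (p.takeUntil z hz1)) hv).symm
    refine ⟨A.append (Walk.cons hxy q), ?_, ?_, ?_⟩
    · rw [Walk.isPath_def, Walk.support_append, Walk.support_cons]
      simp only [List.tail_cons]
      refine List.nodup_append'.mpr ⟨hApath.support_nodup, hq.support_nodup, ?_⟩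
      intro a haA haq
      have hav := hpq a (hAsub haA) haq
      exact hvA (hav ▸ haA)
    · rw [Walk.edges_append, Walk.edges_cons]
      simp
    · intro w hw
      rw [Walk.mem_support_append_iff, Walk.support_cons] at hw
      rcases hw with hw | hw
      · exact Or.inl (hAsub hw)
      · rcases List.mem_cons.mp hw with rfl | hw
        · exact Or.inl (Walk.end_mem_support p)
        · exact Or.inr hw
  · have K1 := split_unique hq hz2
    set B := q.takeUntil z hz2 with hB
    have hBpath : B.IsPath := hq.takeUntil hz2
    have hBsub : B.support ⊆ q.support := Walk.support_takeUntil_subset q hz2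
    have hvB : v ∉ B.support := fun hv =>
      hzv (K1 v hv (Walk.end_mem_support (q.dropUntil z hz2))).symm
    refine ⟨B.reverse.append (Walk.cons hxy.symm p.reverse), ?_, ?_, ?_⟩
    · rw [Walk.isPath_def, Walk.support_append, Walk.support_cons]
      simp only [List.tail_cons]
      rw [Walk.support_reverse, Walk.support_reverse]
      refine List.nodup_append'.mpr ⟨List.nodup_reverse.mpr hBpath.support_nodup,
        List.nodup_reverse.mpr hp.support_nodup, ?_⟩
      intro a haB hap
      rw [List.mem_reverse] at haB hap
      have hav := hpq a hap (hBsub haB)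
      exact hvB (hav ▸ haB)
    · rw [Walk.edges_append, Walk.edges_cons]
      have hs : s(y, x) = s(x, y) := Sym2.eq_swap
      simp [hs]
    · intro w hw
      rw [Walk.mem_support_append_iff, Walk.support_cons] at hw
      rcases hw with hw | hw
      · rw [Walk.support_reverse, List.mem_reverse] at hw
        exact Or.inr (hBsub hw)
      · rcases List.mem_cons.mp hw with rfl | hw
        · exact Or.inr (Walk.start_mem_support q)
        · rw [Walk.support_reverse, List.mem_reverse] at hw
          exact Or.inl hw

section
variable (hcard : 3 ≤ Fintype.card V) (h2c : ∀ v : V, (G.induce {w | w ≠ v}).Connected)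
include hcard h2c

lemma cycle_base [DecidableEq V] {v x y : V} (hxy : G.Adj x y)
    (h : v = x ∨ v = y ∨ G.Adj v x) :
    ∃ (p : G.Walk v x) (q : G.Walk y v), p.IsPath ∧ q.IsPath ∧
      ∀ a, a ∈ p.support → a ∈ q.support → a = v := by
  rcases h with rfl | rfl | hvx
  · obtain ⟨q, hq⟩ := path_between hcard h2c y v
    exact ⟨Walk.nil, q, Walk.IsPath.nil, hq, fun a ha _ => by simpa using ha⟩
  · obtain ⟨p, hp⟩ := path_between hcard h2c v x
    exact ⟨p, Walk.nil, hp, Walk.IsPath.nil, fun a _ ha => by simpa using ha⟩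
  · obtain ⟨q, hq, hqx⟩ := avoid_vertex hcard h2c x hxy.ne' hvx.ne
    refine ⟨Walk.cons hvx Walk.nil, q, ?_, hq, ?_⟩
    · rw [Walk.isPath_def, Walk.support_cons, Walk.support_nil]
      simp [hvx.ne]
    · intro a ha haq
      rw [Walk.support_cons, Walk.support_nil] at ha
      rcases List.mem_cons.mp ha with rfl | ha
      · rfl
      · rcases List.mem_singleton.mp ha with rfl
        exact absurd rfl (hqx a haq)

lemma cycle_through [DecidableEq V] :
    ∀ (n : ℕ) (v x y : V), G.Adj x y → (∃ P : G.Walk v x, P.length ≤ n) →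
    ∃ (p : G.Walk v x) (q : G.Walk y v), p.IsPath ∧ q.IsPath ∧
      ∀ a, a ∈ p.support → a ∈ q.support → a = v := by
  intro n
  induction n with
  | zero =>
    rintro v x y hxy ⟨P, hP⟩
    exact cycle_base hcard h2c hxy
      (Or.inl (Walk.eq_of_length_eq_zero (Nat.le_zero.mp hP)))
  | succ n ih =>
    rintro v x y hxy ⟨P, hP⟩
    by_cases hbase : v = x ∨ v = y ∨ G.Adj v x
    · exact cycle_base hcard h2c hxy hbase
    push_neg at hbase
    obtain ⟨hvx, hvy, hnadj⟩ := hbase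
    cases P with
    | nil => exact absurd rfl hvx
    | @cons _ m _ hvw P' =>
      have hP' : P'.length ≤ n := by
        rw [Walk.length_cons] at hP; omega
      obtain ⟨pw, qw, hpw, hqw, hov⟩ := ih m x y hxy ⟨P', hP'⟩
      have hvm : v ≠ m := hvw.ne
      by_cases hvp : v ∈ pw.support
      · have K1 := split_unique hpw hvp
        refine ⟨pw.dropUntil v hvp, qw.append (pw.takeUntil v hvp),
          hpw.dropUntil hvp, ?_, ?_⟩
        · rw [Walk.isPath_def, Walk.support_append]
          refine List.nodup_append'.mpr ⟨hqw.support_nodup,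
            (hpw.takeUntil hvp).support_nodup.tail, ?_⟩
          intro a haq hat
          have hat' : a ∈ (pw.takeUntil v hvp).support := List.mem_of_mem_tail hat
          have ham : a = m := hov a (Walk.support_takeUntil_subset pw hvp hat') haq
          subst ham
          have : (pw.takeUntil v hvp).support = a :: (pw.takeUntil v hvp).support.tail :=
            Walk.support_eq_cons _
          have hnd := (hpw.takeUntil hvp).support_nodup
          rw [this] at hnd
          exact (List.nodup_cons.mp hnd).1 hat
        · intro a had haQ
          rw [Walk.mem_support_append_iff] at haQ
          rcases haQ with haq | hat
          · have ham : a = m := hov a (Walk.support_dropUntil_subset pw hvp had) haq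
            subst ham
            have : a = v := K1 a (Walk.start_mem_support _) had
            exact absurd this.symm hvm
          · exact K1 a hat had
      · by_cases hvq : v ∈ qw.support
        · have K1 := split_unique hqw hvq
          refine ⟨(qw.dropUntil v hvq).append pw, qw.takeUntil v hvq, ?_,
            hqw.takeUntil hvq, ?_⟩
          · rw [Walk.isPath_def, Walk.support_append]
            refine List.nodup_append'.mpr ⟨(hqw.dropUntil hvq).support_nodup,
              hpw.support_nodup.tail, ?_⟩
            intro a had hat
            have hat' : a ∈ pw.support := List.mem_of_mem_tail hat
            have ham : a = m := hov a hat' (Walk.support_dropUntil_subset qw hvq had)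
            subst ham
            have : pw.support = a :: pw.support.tail := Walk.support_eq_cons _
            have hnd := hpw.support_nodup
            rw [this] at hnd
            exact (List.nodup_cons.mp hnd).1 hat
          · intro a hap hat
            rw [Walk.mem_support_append_iff] at hap
            rcases hap with had | hap
            · exact K1 a hat had
            · have ham : a = m := hov a hap (Walk.support_takeUntil_subset qw hvq hat)
              subst ham
              have : a = v := K1 a hat (Walk.end_mem_support _)
              exact absurd this.symm hvm
        · -- fan case
          have hmx : m ≠ x := fun h => hnadj (h ▸ hvw)
          obtain ⟨P0, hP0, hP0m⟩ := avoid_vertex hcard h2c m hvm (Ne.symm hmx)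
          have hxS : x ∈ {a | a ∈ pw.support ∨ a ∈ qw.support} :=
            Or.inl pw.end_mem_support
          obtain ⟨z, Q, hQp, hzS, hQS, hQsub⟩ := first_hit P0 hxS
          have hzm : z ≠ m := hP0m z (hQsub z Q.end_mem_support)
          rcases hzS with hz1 | hz2
          · have K1 := split_unique hpw hz1
            refine ⟨Q.append (pw.dropUntil z hz1), qw.concat hvw.symm, ?_, ?_, ?_⟩
            · rw [Walk.isPath_def, Walk.support_append]
              refine List.nodup_append'.mpr ⟨hQp.support_nodup,
                (hpw.dropUntil hz1).support_nodup.tail, ?_⟩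
              intro a haQ hat
              have hat' : a ∈ (pw.dropUntil z hz1).support := List.mem_of_mem_tail hat
              have haz : a = z := hQS a haQ
                (Or.inl (Walk.support_dropUntil_subset pw hz1 hat'))
              rw [haz] at hat
              exact start_not_mem_tail (hpw.dropUntil hz1).support_nodup hat
            · rw [Walk.concat_eq_append, Walk.isPath_def, Walk.support_append,
                Walk.support_cons, Walk.support_nil]
              simp only [List.tail_cons]
              refine List.nodup_append'.mpr ⟨hqw.support_nodup, List.nodup_singleton _, ?_⟩
              intro a haq ha
              rcases List.mem_singleton.mp ha with rfl
              exact hvq haq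
            · intro a hap haq
              rw [Walk.mem_support_append_iff] at hap
              rw [Walk.concat_eq_append, Walk.mem_support_append_iff] at haq
              rcases haq with haq | hav
              swap
              · rw [Walk.support_cons, Walk.support_nil] at hav
                rcases List.mem_cons.mp hav with ham | hav
                · exfalso
                  rcases hap with haQ | had
                  · have hapw : a ∈ pw.support := by
                      rw [ham]; exact Walk.start_mem_support pw
                    have haz : a = z := hQS a haQ (Or.inl hapw)
                    exact hzm (haz.symm.trans ham)
                  · have hatk : a ∈ (pw.takeUntil z hz1).support := by
                      rw [ham]; exact Walk.start_mem_support _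
                    exact hzm ((K1 a hatk had).symm.trans ham)
                · exact List.mem_singleton.mp hav
              · exfalso
                rcases hap with haQ | had
                · have haz : a = z := hQS a haQ (Or.inr haq)
                  have ham : a = m := by
                    rw [haz]; exact hov z hz1 (haz ▸ haq)
                  exact hzm (haz.symm.trans ham)
                · have ham : a = m := hov a (Walk.support_dropUntil_subset pw hz1 had) haq
                  have hatk : a ∈ (pw.takeUntil z hz1).support := by
                    rw [ham]; exact Walk.start_mem_support _
                  exact hzm ((K1 a hatk had).symm.trans ham)
          · have K1 := split_unique hqw hz2
            refine ⟨Walk.cons hvw pw, (qw.takeUntil z hz2).append Q.reverse, ?_, ?_, ?_⟩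
            · rw [Walk.cons_isPath_iff]
              exact ⟨hpw, hvp⟩
            · rw [Walk.isPath_def, Walk.support_append]
              refine List.nodup_append'.mpr ⟨(hqw.takeUntil hz2).support_nodup,
                ?_, ?_⟩
              · rw [Walk.support_reverse]
                exact (List.nodup_reverse.mpr hQp.support_nodup).tail
              · intro a hat harev
                have harev' : a ∈ Q.reverse.support := List.mem_of_mem_tail harev
                rw [Walk.support_reverse, List.mem_reverse] at harev'
                have haz : a = z := hQS a harev'
                  (Or.inr (Walk.support_takeUntil_subset qw hz2 hat))
                subst haz
                have : Q.reverse.support = a :: Q.reverse.support.tail :=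
                  Walk.support_eq_cons _
                have hnd : Q.reverse.support.Nodup := by
                  rw [Walk.support_reverse]; exact List.nodup_reverse.mpr hQp.support_nodup
                rw [this] at hnd
                exact (List.nodup_cons.mp hnd).1 harev
            · intro a hap haq
              rw [Walk.support_cons] at hap
              rw [Walk.mem_support_append_iff] at haq
              rcases List.mem_cons.mp hap with rfl | hap
              · rfl
              · rcases haq with hat | harev
                · have ham : a = m := hov a hap (Walk.support_takeUntil_subset qw hz2 hat)
                  subst ham
                  have hmd : a ∈ (qw.dropUntil z hz2).support := Walk.end_mem_support _
                  exact absurd (K1 a hat hmd).symm hzm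
                · rw [Walk.support_reverse, List.mem_reverse] at harev
                  have haz : a = z := hQS a harev (Or.inl hap)
                  subst haz
                  exact absurd (hov a hap hz2) hzm

end

end CFCAux25

open CFCAux25 in
/-- In a 2-connected graph, any two distinct vertices are joined by a path through
any prescribed edge. -/
theorem stmt_5 {V : Type u} [Fintype V] (G : SimpleGraph V)
    (hcard : 3 ≤ Fintype.card V)
    (h2c : ∀ v : V, (G.induce {w | w ≠ v}).Connected)
    (u v : V) (huv : u ≠ v) (e : Sym2 V) (he : e ∈ G.edgeSet) :
    ∃ p : G.Walk u v, p.IsPath ∧ e ∈ p.edges := by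
  classical
  induction e using Sym2.ind with
  | _ x y =>
  have hxy : G.Adj x y := (G.mem_edgeSet).mp he
  obtain ⟨P1⟩ := reach hcard h2c v x
  obtain ⟨p, q, hp, hq, hov⟩ :=
    cycle_through hcard h2c P1.length v x y hxy ⟨P1, le_refl _⟩
  by_cases hu : u ∈ p.support ∨ u ∈ q.support
  · obtain ⟨W, hW, heW, -⟩ := through_edge hxy p q hp hq hov hu huv
    exact ⟨W, hW, heW⟩
  · obtain ⟨t, htv, htS⟩ : ∃ t, t ≠ v ∧ (t ∈ p.support ∨ t ∈ q.support) := by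
      by_cases hxv : x = v
      · refine ⟨y, ?_, Or.inr q.start_mem_support⟩
        intro h
        exact hxy.ne (hxv ▸ h ▸ rfl : x = y)
      · exact ⟨x, hxv, Or.inl p.end_mem_support⟩
    obtain ⟨P0, hP0, hP0v⟩ := avoid_vertex hcard h2c v huv htv
    obtain ⟨z, Q, hQp, hzS, hQS, hQsub⟩ :=
      first_hit (S := {a | a ∈ p.support ∨ a ∈ q.support}) P0 htS
    have hzv : z ≠ v := hP0v z (hQsub z Q.end_mem_support)
    obtain ⟨W, hW, heW, hWS⟩ := through_edge hxy p q hp hq hov hzS hzv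
    refine ⟨Q.append W, ?_, ?_⟩
    · rw [Walk.isPath_def, Walk.support_append]
      refine List.nodup_append'.mpr ⟨hQp.support_nodup, hW.support_nodup.tail, ?_⟩
      intro a haQ hat
      have hat' : a ∈ W.support := List.mem_of_mem_tail hat
      have haz : a = z := hQS a haQ (hWS a hat')
      rw [haz] at hat
      exact start_not_mem_tail hW.support_nodup hat
    · rw [Walk.edges_append]
      exact List.mem_append_right _ heW
end

section
/- Let G be a connected graph. Then from each nontrivial block of G one can choose an edge such that the set of all chosen edges forms a matching in G. -/
open SimpleGraph

universe u

section Helpers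
variable {V : Type u} {G : SimpleGraph V}


lemma reachable_induce_of_walk {S : Set V} :
    ∀ {a b : V} (w : G.Walk a b), (∀ c ∈ w.support, c ∈ S) →
      ∀ (ha : a ∈ S) (hb : b ∈ S), (G.induce S).Reachable ⟨a, ha⟩ ⟨b, hb⟩ := by
  intro a b w
  induction w with
  | nil => intro _ ha hb; rfl
  | @cons a c b h w ih =>
    intro hS ha hb
    have hc : c ∈ S := hS c (by simp [Walk.support_cons])
    have h1 : (G.induce S).Adj ⟨a, ha⟩ ⟨c, hc⟩ := by simpa using h
    exact h1.reachable.trans (ih (fun d hd => hS d (by simp [Walk.support_cons, hd])) hc hb)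

lemma reachable_induce_mono {S T : Set V} (hST : S ⊆ T) :
    ∀ {u v : ↥S} (_ : (G.induce S).Reachable u v),
      (G.induce T).Reachable ⟨u, hST u.2⟩ ⟨v, hST v.2⟩ := by
  intro u v h
  obtain ⟨w⟩ := h
  induction w with
  | nil => rfl
  | @cons a c b h w ih =>
    have h1 : (G.induce T).Adj ⟨↑a, hST a.2⟩ ⟨↑c, hST c.2⟩ := by
      simpa using h
    exact h1.reachable.trans ih


def indIso {S : Set V} (v : ↥S) :
    ((G.induce S).induce {w | w ≠ v}) ≃g G.induce (S \ {(v : V)}) where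
  toFun w := ⟨w.1.1, w.1.2, fun h => w.2 (Subtype.ext h)⟩
  invFun w := ⟨⟨w.1, w.2.1⟩, fun h => w.2.2 (congrArg Subtype.val h)⟩
  left_inv w := rfl
  right_inv w := rfl
  map_rel_iff' := by intro a b; simp [comap_adj]

lemma connected_induce_diff_iff {S : Set V} (v : ↥S) :
    ((G.induce S).induce {w | w ≠ v}).Connected ↔ (G.induce (S \ {(v : V)})).Connected :=
  (indIso v).connected_iff

lemma exists_adj_of_connected {S : Set V} (hfin : S.Finite)
    (h : (G.induce S).Connected) (hcard : 1 < S.ncard) :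
    ∃ a b : V, a ∈ S ∧ b ∈ S ∧ G.Adj a b := by
  obtain ⟨a, ha, b, hb, hab⟩ := (Set.one_lt_ncard hfin).mp hcard
  obtain ⟨w⟩ := h.preconnected ⟨a, ha⟩ ⟨b, hb⟩
  cases w with
  | nil => exact absurd rfl hab
  | cons hadj w' =>
    rename_i c
    exact ⟨a, c, ha, c.2, by simpa using hadj⟩

lemma eq_of_mem_takeUntil_mem_dropUntil [DecidableEq V] {a b u c : V} {q : G.Walk a b} (hq : q.IsPath)
    (hu : u ∈ q.support) (h1 : c ∈ (q.takeUntil u hu).support)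
    (h2 : c ∈ (q.dropUntil u hu).support) : c = u := by
  have hspec := q.take_spec hu
  have hnd : ((q.takeUntil u hu).append (q.dropUntil u hu)).support.Nodup := by
    rw [hspec]; exact hq.support_nodup
  rw [Walk.support_append] at hnd
  rw [(q.dropUntil u hu).support_eq_cons] at h2
  rcases List.mem_cons.mp h2 with h | h
  · exact h
  · exact absurd h (List.disjoint_of_nodup_append hnd h1)

lemma exists_walk_avoiding [DecidableEq V] {p₁ p₂ u v : V} {q : G.Walk p₁ p₂} (hq : q.IsPath)
    (hu : u ∈ q.support) (hv : v ∈ q.support) (huv : u ≠ v) :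
    (∃ w : G.Walk u p₁, v ∉ w.support ∧ ∀ c ∈ w.support, c ∈ q.support) ∨
    (∃ w : G.Walk u p₂, v ∉ w.support ∧ ∀ c ∈ w.support, c ∈ q.support) := by
  have hu' : u ∈ (q.takeUntil v hv).support ∨ u ∈ (q.dropUntil v hv).support := by
    rw [← Walk.mem_support_append_iff, q.take_spec hv]; exact hu
  rcases hu' with h | h
  · left
    refine ⟨((q.takeUntil v hv).takeUntil u h).reverse, ?_, ?_⟩
    · rw [Walk.support_reverse, List.mem_reverse]
      intro hvin
      exact huv.symm (eq_of_mem_takeUntil_mem_dropUntil (hq.takeUntil hv) h hvin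
        ((q.takeUntil v hv).dropUntil u h).end_mem_support)
    · intro c hc
      rw [Walk.support_reverse, List.mem_reverse] at hc
      exact q.support_takeUntil_subset hv (((q.takeUntil v hv).support_takeUntil_subset h) hc)
  · right
    refine ⟨(q.dropUntil v hv).dropUntil u h, ?_, ?_⟩
    · intro hvin
      exact huv.symm (eq_of_mem_takeUntil_mem_dropUntil (hq.dropUntil hv) h
        ((q.dropUntil v hv).takeUntil u h).start_mem_support hvin)
    · intro c hc
      exact q.support_dropUntil_subset hv (((q.dropUntil v hv).support_dropUntil_subset h) hc)

lemma ncv_diff {B : Set V} (h : NoCutVertex (G.induce B)) {x : V} (hx : x ∈ B) :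
    (G.induce (B \ {x})).Connected :=
  (connected_induce_diff_iff ⟨x, hx⟩).mp (h ⟨x, hx⟩)

lemma ncv_of_diff {B : Set V} (h : ∀ x ∈ B, (G.induce (B \ {x})).Connected) :
    NoCutVertex (G.induce B) := fun v => (connected_induce_diff_iff v).mpr (h v v.2)

lemma reach_in_diff {B D : Set V} (hC : (G.induce B).Connected) (hN : NoCutVertex (G.induce B))
    {z : V} (hBD : B \ {z} ⊆ D) {a b : V} (ha : a ∈ B) (hb : b ∈ B) (haz : a ≠ z) (hbz : b ≠ z) :
    (G.induce D).Reachable ⟨a, hBD ⟨ha, haz⟩⟩ ⟨b, hBD ⟨hb, hbz⟩⟩ := by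
  by_cases hz : z ∈ B
  · exact reachable_induce_mono hBD
      ((ncv_diff hN hz).preconnected ⟨a, ⟨ha, haz⟩⟩ ⟨b, ⟨hb, hbz⟩⟩)
  · have hsub : B ⊆ D := fun c hc => hBD ⟨hc, fun h => hz (h ▸ hc)⟩
    exact reachable_induce_mono hsub (hC.preconnected ⟨a, ha⟩ ⟨b, hb⟩)

lemma union_eq_left_of_two_mem {B₁ B₂ : Set V} (h₁ : IsBlock G B₁) (h₂ : IsBlock G B₂)
    {x y : V} (hx1 : x ∈ B₁) (hx2 : x ∈ B₂) (hy1 : y ∈ B₁) (hy2 : y ∈ B₂) (hxy : x ≠ y) :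
    B₁ ∪ B₂ = B₁ := by
  have hUconn : (G.induce (B₁ ∪ B₂)).Connected := by
    rw [connected_iff]
    refine ⟨?_, ⟨⟨x, Or.inl hx1⟩⟩⟩
    have key : ∀ u : ↥(B₁ ∪ B₂), (G.induce (B₁ ∪ B₂)).Reachable u ⟨x, Or.inl hx1⟩ := by
      rintro ⟨u, hu | hu⟩
      · exact reachable_induce_mono Set.subset_union_left (h₁.1.preconnected ⟨u, hu⟩ ⟨x, hx1⟩)
      · exact reachable_induce_mono Set.subset_union_right (h₂.1.preconnected ⟨u, hu⟩ ⟨x, hx2⟩)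
    intro u w; exact (key u).trans (key w).symm
  have hUncv : NoCutVertex (G.induce (B₁ ∪ B₂)) := by
    apply ncv_of_diff
    intro z hz
    obtain ⟨h, hh1, hh2, hhz⟩ : ∃ h, h ∈ B₁ ∧ h ∈ B₂ ∧ h ≠ z := by
      by_cases hzx : z = x
      · exact ⟨y, hy1, hy2, fun hyz => hxy (hzx ▸ hyz ▸ rfl)⟩
      · exact ⟨x, hx1, hx2, fun hxz => hzx hxz.symm⟩
    rw [connected_iff]
    refine ⟨?_, ⟨⟨h, Or.inl hh1, hhz⟩⟩⟩
    have key : ∀ u : ↥((B₁ ∪ B₂) \ {z}),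
        (G.induce ((B₁ ∪ B₂) \ {z})).Reachable u ⟨h, Or.inl hh1, hhz⟩ := by
      rintro ⟨u, hu | hu, huz⟩
      · exact reach_in_diff h₁.1 h₁.2.1 (Set.diff_subset_diff_left Set.subset_union_left) hu hh1 huz hhz
      · exact reach_in_diff h₂.1 h₂.2.1 (Set.diff_subset_diff_left Set.subset_union_right) hu hh2 huz hhz
    intro u w; exact (key u).trans (key w).symm
  exact h₁.2.2 (B₁ ∪ B₂) Set.subset_union_left hUconn hUncv

lemma block_eq_of_two_mem {B₁ B₂ : Set V} (h₁ : IsBlock G B₁) (h₂ : IsBlock G B₂)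
    {x y : V} (hx1 : x ∈ B₁) (hx2 : x ∈ B₂) (hy1 : y ∈ B₁) (hy2 : y ∈ B₂) (hxy : x ≠ y) :
    B₁ = B₂ := by
  have e1 := union_eq_left_of_two_mem h₁ h₂ hx1 hx2 hy1 hy2 hxy
  have e2 := union_eq_left_of_two_mem h₂ h₁ hx2 hx1 hy2 hy1 hxy
  rw [Set.union_comm] at e2
  exact e1.symm.trans e2

lemma dist_walk_avoid {r p x : V} (hp : p ≠ x) (hd : G.dist r p ≤ G.dist r x)
    {w : G.Walk r p} (hlen : w.length = G.dist r p) : x ∉ w.support := by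
  classical
  intro hxs
  have h1 : G.dist r x ≤ (w.takeUntil x hxs).length := G.dist_le _
  have h2 : 1 ≤ (w.dropUntil x hxs).length := by
    rcases Nat.eq_zero_or_pos (w.dropUntil x hxs).length with h | h
    · exact absurd (Walk.eq_of_length_eq_zero h).symm hp
    · exact h
  have h3 : w.length = (w.takeUntil x hxs).length + (w.dropUntil x hxs).length := by
    conv_lhs => rw [← w.take_spec hxs]
    exact Walk.length_append _ _
  omega

lemma block_sep [DecidableEq V] {B₁ B₂ : Set V} (hconn : G.Connected)
    (h₁ : IsBlock G B₁) (h₂ : IsBlock G B₂) (hne : B₁ ≠ B₂) {x p₁ p₂ r : V}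
    (hx1 : x ∈ B₁) (hx2 : x ∈ B₂) (hp₁ : p₁ ∈ B₁) (hp₂ : p₂ ∈ B₂)
    (hp₁x : p₁ ≠ x) (hp₂x : p₂ ≠ x)
    (hd₁ : G.dist r p₁ ≤ G.dist r x) (hd₂ : G.dist r p₂ ≤ G.dist r x) : False := by
  obtain ⟨w₁, hw₁⟩ := hconn.exists_walk_length_eq_dist r p₁
  obtain ⟨w₂, hw₂⟩ := hconn.exists_walk_length_eq_dist r p₂
  have hxw₁ : x ∉ w₁.support := dist_walk_avoid hp₁x hd₁ hw₁
  have hxw₂ : x ∉ w₂.support := dist_walk_avoid hp₂x hd₂ hw₂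
  set W : G.Walk p₁ p₂ := w₁.reverse.append w₂ with hW
  set q : G.Walk p₁ p₂ := W.bypass with hq'
  have hq : q.IsPath := W.bypass_isPath
  have hqsub : q.support ⊆ W.support := W.support_bypass_subset
  have hxq : x ∉ q.support := by
    intro hxq
    rcases (Walk.mem_support_append_iff _ _).mp (hqsub hxq) with h | h
    · rw [Walk.support_reverse, List.mem_reverse] at h; exact hxw₁ h
    · exact hxw₂ h
  have hp₂B₁ : p₂ ∉ B₁ := fun h =>
    hne (block_eq_of_two_mem h₁ h₂ hx1 hx2 h hp₂ (Ne.symm hp₂x))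
  set Q : Set V := {c | c ∈ q.support} with hQ
  set B' : Set V := B₁ ∪ B₂ ∪ Q with hB'
  have hB₁B' : B₁ ⊆ B' := fun c hc => Or.inl (Or.inl hc)
  have hB₂B' : B₂ ⊆ B' := fun c hc => Or.inl (Or.inr hc)
  have hQB' : Q ⊆ B' := fun c hc => Or.inr hc
  have hxB' : x ∈ B' := hB₁B' hx1
  have hp₁B' : p₁ ∈ B' := hB₁B' hp₁
  have hxz' : True := trivial
  -- connectivity of B'
  have hUconn : (G.induce B').Connected := by
    rw [connected_iff]
    refine ⟨?_, ⟨⟨x, hxB'⟩⟩⟩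
    have key : ∀ u : ↥B', (G.induce B').Reachable u ⟨x, hxB'⟩ := by
      rintro ⟨u, (hu | hu) | hu⟩
      · exact reachable_induce_mono hB₁B' (h₁.1.preconnected ⟨u, hu⟩ ⟨x, hx1⟩)
      · exact reachable_induce_mono hB₂B' (h₂.1.preconnected ⟨u, hu⟩ ⟨x, hx2⟩)
      · have hu' : u ∈ q.support := hu
        have t1 : (G.induce B').Reachable ⟨u, hQB' hu⟩ ⟨p₁, hp₁B'⟩ :=
          reachable_induce_of_walk ((q.takeUntil u hu').reverse)
            (fun c hc => by
              rw [Walk.support_reverse, List.mem_reverse] at hc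
              exact hQB' (q.support_takeUntil_subset hu' hc)) _ _
        exact t1.trans (reachable_induce_mono hB₁B' (h₁.1.preconnected ⟨p₁, hp₁⟩ ⟨x, hx1⟩))
    intro u w; exact (key u).trans (key w).symm
  -- no cut vertex of B'
  have hUncv : NoCutVertex (G.induce B') := by
    apply ncv_of_diff
    intro z hz
    rw [connected_iff]
    by_cases hzx : z = x
    · subst hzx
      have hp₁D : p₁ ∈ B' \ {z} := ⟨hp₁B', hp₁x⟩
      refine ⟨?_, ⟨⟨p₁, hp₁D⟩⟩⟩
      have hQD : Q ⊆ B' \ {z} := fun c hc => ⟨hQB' hc, fun h => hxq (h ▸ hc)⟩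
      have key : ∀ u : ↥(B' \ {z}),
          (G.induce (B' \ {z})).Reachable u ⟨p₁, hp₁D⟩ := by
        rintro ⟨u, (hu | hu) | hu, huz⟩
        · exact reach_in_diff h₁.1 h₁.2.1
            (Set.diff_subset_diff_left hB₁B') hu hp₁ huz hp₁x
        · have t1 := reach_in_diff (G := G) h₂.1 h₂.2.1
            (Set.diff_subset_diff_left hB₂B') hu hp₂ huz hp₂x
          have t2 : (G.induce (B' \ {z})).Reachable ⟨p₂, hQD q.end_mem_support⟩
              ⟨p₁, hp₁D⟩ :=
            reachable_induce_of_walk q.reverse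
              (fun c hc => by
                rw [Walk.support_reverse, List.mem_reverse] at hc
                exact hQD hc) _ _
          exact t1.trans t2
        · have hu' : u ∈ q.support := hu
          exact reachable_induce_of_walk ((q.takeUntil u hu').reverse)
            (fun c hc => by
              rw [Walk.support_reverse, List.mem_reverse] at hc
              exact hQD (q.support_takeUntil_subset hu' hc)) _ _
      intro u w; exact (key u).trans (key w).symm
    · have hxz : x ≠ z := fun h => hzx h.symm
      have hxD : x ∈ B' \ {z} := ⟨hxB', hxz⟩
      refine ⟨?_, ⟨⟨x, hxD⟩⟩⟩
      have reach₁ : ∀ (p : V) (hp : p ∈ B₁) (hpz : p ≠ z),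
          (G.induce (B' \ {z})).Reachable ⟨p, ⟨hB₁B' hp, hpz⟩⟩ ⟨x, hxD⟩ := by
        intro p hp hpz
        exact reach_in_diff h₁.1 h₁.2.1 (Set.diff_subset_diff_left hB₁B') hp hx1 hpz hxz
      have reach₂ : ∀ (p : V) (hp : p ∈ B₂) (hpz : p ≠ z),
          (G.induce (B' \ {z})).Reachable ⟨p, ⟨hB₂B' hp, hpz⟩⟩ ⟨x, hxD⟩ := by
        intro p hp hpz
        exact reach_in_diff h₂.1 h₂.2.1 (Set.diff_subset_diff_left hB₂B') hp hx2 hpz hxz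
      have key : ∀ u : ↥(B' \ {z}),
          (G.induce (B' \ {z})).Reachable u ⟨x, hxD⟩ := by
        rintro ⟨u, (hu | hu) | hu, huz⟩
        · exact reach₁ u hu huz
        · exact reach₂ u hu huz
        · have hu' : u ∈ q.support := hu
          have huz' : u ≠ z := huz
          by_cases hzq : z ∈ q.support
          · rcases exists_walk_avoiding hq hu' hzq huz' with ⟨w, hzw, hws⟩ | ⟨w, hzw, hws⟩
            · have hsub : ∀ c ∈ w.support, c ∈ B' \ {z} :=
                fun c hc => ⟨hQB' (hws c hc), fun h => hzw (h ▸ hc)⟩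
              have t1 : (G.induce (B' \ {z})).Reachable ⟨u, hsub u w.start_mem_support⟩
                  ⟨p₁, hsub p₁ w.end_mem_support⟩ :=
                reachable_induce_of_walk w hsub _ _
              have hp₁z : p₁ ≠ z := fun h => hzw (h ▸ w.end_mem_support)
              exact t1.trans (reach₁ p₁ hp₁ hp₁z)
            · have hsub : ∀ c ∈ w.support, c ∈ B' \ {z} :=
                fun c hc => ⟨hQB' (hws c hc), fun h => hzw (h ▸ hc)⟩
              have t1 : (G.induce (B' \ {z})).Reachable ⟨u, hsub u w.start_mem_support⟩
                  ⟨p₂, hsub p₂ w.end_mem_support⟩ :=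
                reachable_induce_of_walk w hsub _ _
              have hp₂z : p₂ ≠ z := fun h => hzw (h ▸ w.end_mem_support)
              exact t1.trans (reach₂ p₂ hp₂ hp₂z)
          · have hsub : ∀ c ∈ (q.takeUntil u hu').reverse.support, c ∈ B' \ {z} := by
              intro c hc
              rw [Walk.support_reverse, List.mem_reverse] at hc
              have := q.support_takeUntil_subset hu' hc
              exact ⟨hQB' this, fun h => hzq (h ▸ this)⟩
            have t1 : (G.induce (B' \ {z})).Reachable
                ⟨u, hsub u (by simp [Walk.support_reverse])⟩
                ⟨p₁, hsub p₁ (by simp [Walk.support_reverse])⟩ :=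
              reachable_induce_of_walk _ hsub _ _
            have hp₁z : p₁ ≠ z := fun h => hzq (h ▸ q.start_mem_support)
            exact t1.trans (reach₁ p₁ hp₁ hp₁z)
      intro u w; exact (key u).trans (key w).symm
  have := h₁.2.2 B' hB₁B' hUconn hUncv
  exact hp₂B₁ (this ▸ hB₂B' hp₂)

end Helpers

/-- From each nontrivial block of a connected graph one can choose an edge so that
the chosen edges form a matching. -/
theorem stmt_6 {V : Type u} [Fintype V] (G : SimpleGraph V) (hconn : G.Connected) :
    ∃ f : Set V → Sym2 V,
      (∀ B : Set V, IsBlock G B → 3 ≤ B.ncard →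
        f B ∈ G.edgeSet ∧ ∀ x ∈ f B, x ∈ B) ∧
      (∀ B₁ B₂ : Set V, IsBlock G B₁ → 3 ≤ B₁.ncard → IsBlock G B₂ → 3 ≤ B₂.ncard →
        B₁ ≠ B₂ → ∀ x : V, x ∈ f B₁ → x ∉ f B₂) := by
  classical
  have hV : Nonempty V := hconn.nonempty
  obtain ⟨r⟩ := hV
  have hVne : Nonempty V := ⟨r⟩
  have hVne2 : Nonempty (V × V) := ⟨(r, r)⟩
  have hmin : ∀ B : Set V, B.Nonempty →
      ∃ m, m ∈ B ∧ ∀ b ∈ B, G.dist r m ≤ G.dist r b := by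
    intro B hB
    obtain ⟨m, hm, hm'⟩ := Set.exists_min_image B (G.dist r) B.toFinite hB
    exact ⟨m, hm, hm'⟩
  choose! p hpmem hpmin using hmin
  have hedge : ∀ B : Set V, IsBlock G B ∧ 3 ≤ B.ncard → ∃ ab : V × V,
      (ab.1 ∈ B ∧ ab.1 ≠ p B) ∧ (ab.2 ∈ B ∧ ab.2 ≠ p B) ∧ G.Adj ab.1 ab.2 := by
    rintro B ⟨hB, hcard⟩
    have hBne : B.Nonempty := Set.nonempty_of_ncard_ne_zero (by omega)
    have hpB : p B ∈ B := hpmem B hBne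
    have hconnD : (G.induce (B \ {p B})).Connected := ncv_diff hB.2.1 hpB
    have hcard' : 1 < (B \ {p B}).ncard := by
      rw [Set.ncard_diff_singleton_of_mem hpB]
      omega
    obtain ⟨a, b, ha, hb, hab⟩ := exists_adj_of_connected (B \ {p B}).toFinite hconnD hcard'
    exact ⟨(a, b), ⟨ha.1, ha.2⟩, ⟨hb.1, hb.2⟩, hab⟩
  choose! e he using hedge
  refine ⟨fun B => s((e B).1, (e B).2), ?_, ?_⟩
  · intro B hB hcard
    obtain ⟨ha, hb, hab⟩ := he B ⟨hB, hcard⟩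
    refine ⟨hab, ?_⟩
    intro x hx
    rcases Sym2.mem_iff.mp hx with rfl | rfl
    · exact ha.1
    · exact hb.1
  · intro B₁ B₂ h₁ hc₁ h₂ hc₂ hne x hx₁ hx₂
    obtain ⟨ha₁, hb₁, _⟩ := he B₁ ⟨h₁, hc₁⟩
    obtain ⟨ha₂, hb₂, _⟩ := he B₂ ⟨h₂, hc₂⟩
    have hx₁' : x ∈ B₁ ∧ x ≠ p B₁ := by
      rcases Sym2.mem_iff.mp hx₁ with rfl | rfl
      · exact ha₁
      · exact hb₁
    have hx₂' : x ∈ B₂ ∧ x ≠ p B₂ := by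
      rcases Sym2.mem_iff.mp hx₂ with rfl | rfl
      · exact ha₂
      · exact hb₂
    have hne₁ : B₁.Nonempty := ⟨x, hx₁'.1⟩
    have hne₂ : B₂.Nonempty := ⟨x, hx₂'.1⟩
    exact block_sep hconn h₁ h₂ hne hx₁'.1 hx₂'.1 (hpmem B₁ hne₁) (hpmem B₂ hne₂)
      (Ne.symm hx₁'.2) (Ne.symm hx₂'.2)
      (hpmin B₁ hne₁ x hx₁'.1) (hpmin B₂ hne₂ x hx₂'.1)
end

section
/- If G is a connected claw-free graph, then the subgraph C(G) of G induced by the set of cut-edges of G is a linear forest (a disjoint union of paths), and moreover every internal vertex of each path component of C(G) has degree 2 in G. -/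
open SimpleGraph

universe u

lemma cutG_adj {V : Type u} {G : SimpleGraph V} {u w : V} :
    (cutG G).Adj u w ↔ G.IsBridge s(u, w) := by
  constructor
  · intro h
    exact ((SimpleGraph.fromEdgeSet_adj _).mp h).1
  · intro h
    exact (SimpleGraph.fromEdgeSet_adj _).mpr ⟨h, by rintro rfl; exact h (Reachable.refl _)⟩

lemma not_bridge_of_triangle {V : Type u} (G : SimpleGraph V) {v a b : V}
    (hva : G.Adj v a) (hvb : G.Adj v b) (hab : G.Adj a b) : ¬G.IsBridge s(v, a) := by
  rw [isBridge_iff]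
  intro h
  apply h
  rw [reachable_delete_edges_iff_exists_walk]
  refine ⟨Walk.cons hvb (Walk.cons hab.symm Walk.nil), ?_⟩
  simp only [Walk.edges_cons, Walk.edges_nil, List.mem_cons, List.not_mem_nil, or_false]
  push_neg
  constructor
  · intro he
    rw [Sym2.eq_iff] at he
    rcases he with ⟨-, h1⟩ | ⟨h1, -⟩
    · exact hab.ne h1
    · exact hvb.ne h1
  · intro he
    rw [Sym2.eq_iff] at he
    rcases he with ⟨h1, -⟩ | ⟨h1, -⟩
    · exact hvb.ne h1
    · exact hva.ne h1

lemma cutG_le {V : Type u} (G : SimpleGraph V) (hconn : G.Connected) : cutG G ≤ G := by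
  intro u w h
  exact (cutG_adj.mp h).reachable_iff_adj.mp (hconn u w)

/-- For a connected claw-free graph, the cut-edge subgraph is a linear forest whose
internal (degree-2) vertices have degree 2 in G. -/
theorem stmt_7 {V : Type u} [Fintype V] (G : SimpleGraph V) (hconn : G.Connected)
    (hcf : ClawFree G) :
    (cutG G).IsAcyclic ∧ (∀ v : V, ((cutG G).neighborSet v).ncard ≤ 2) ∧
      ∀ v : V, ((cutG G).neighborSet v).ncard = 2 → (G.neighborSet v).ncard = 2 := by
  have hadj : ∀ x y : V, G.IsBridge s(x, y) → G.Adj x y :=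
    fun x y h => h.reachable_iff_adj.mp (hconn x y)
  have key : ∀ v a b : V, G.IsBridge s(v, a) → G.Adj v b → ¬G.Adj a b := by
    intro v a b hbr hvb hab
    exact not_bridge_of_triangle G (hadj _ _ hbr) hvb hab hbr
  refine ⟨?_, ?_, ?_⟩
  · -- acyclic
    intro v p hp
    cases p with
    | nil => exact hp.ne_nil rfl
    | @cons _ b _ h q =>
      have hbr : G.IsBridge s(v, b) := cutG_adj.mp h
      have hq := hp.mapLe (cutG_le G hconn)
      rw [isBridge_iff_forall_cycle_notMem (G.mem_edgeSet.mpr (hadj _ _ hbr))] at hbr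
      refine hbr _ hq ?_
      simp [Walk.mapLe, Walk.edges_map, Sym2.map_id']
  · -- degree ≤ 2
    intro v
    by_contra h
    push_neg at h
    obtain ⟨t, hts, ht3⟩ := Set.exists_subset_card_eq h
    obtain ⟨a, b, c, hab, hac, hbc, rfl⟩ := Set.ncard_eq_three.mp ht3
    have ha := cutG_adj.mp (hts (by simp : a ∈ ({a,b,c} : Set V)))
    have hb := cutG_adj.mp (hts (by simp : b ∈ ({a,b,c} : Set V)))
    have hc := cutG_adj.mp (hts (by simp : c ∈ ({a,b,c} : Set V)))
    exact hcf v a b c (hadj _ _ ha) (hadj _ _ hb)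
      (hadj _ _ hc) hab hac hbc
      (key v a b ha (hadj _ _ hb))
      (key v a c ha (hadj _ _ hc))
      (key v b c hb (hadj _ _ hc))
  · -- internal vertices have degree 2 in G
    intro v h2
    obtain ⟨a, b, hab, hset⟩ := Set.ncard_eq_two.mp h2
    have hma : a ∈ (cutG G).neighborSet v := by rw [hset]; simp
    have hmb : b ∈ (cutG G).neighborSet v := by rw [hset]; simp
    have ha : G.IsBridge s(v, a) := cutG_adj.mp hma
    have hb : G.IsBridge s(v, b) := cutG_adj.mp hmb
    have hGa := hadj _ _ ha
    have hGb := hadj _ _ hb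
    have : G.neighborSet v = {a, b} := by
      apply Set.eq_of_subset_of_subset
      · intro c hc
        simp only [Set.mem_insert_iff, Set.mem_singleton_iff]
        by_contra hne
        push_neg at hne
        obtain ⟨hca, hcb⟩ := hne
        exact hcf v a b c hGa hGb hc hab (Ne.symm hca) (Ne.symm hcb)
          (key v a b ha hGb) (key v a c ha hc) (key v b c hb hc)
      · intro c hc
        rcases hc with rfl | hc
        · exact hGa
        · rw [Set.mem_singleton_iff] at hc; subst hc; exact hGb
    rw [this, Set.ncard_pair hab]
end

section
/- Let G be a connected graph with at least one cut-edge, and let h(G) = max{cfc(K) : K is a connected component of C(G)}, where C(G) is the subgraph induced by the cut-edges of G. Then h(G) ≤ cfc(G) ≤ h(G) + 1. -/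
open SimpleGraph

universe u

section AuxBasics

variable {V : Type u} {G : SimpleGraph V}

/-- Deleting all bridges. -/
def auxBF {V : Type u} (G : SimpleGraph V) : SimpleGraph V :=
  G.deleteEdges {e | G.IsBridge e}

lemma aux_isPath_append {a b d : V} {p : G.Walk a b} {q : G.Walk b d}
    (hp : p.IsPath) (hq : q.IsPath)
    (hj : ∀ x, x ∈ p.support → x ∈ q.support → x = b) :
    (p.append q).IsPath := by
  rw [Walk.isPath_def, Walk.support_append, List.nodup_append]
  have hqn := hq.support_nodup
  rw [q.support_eq_cons] at hqn
  rw [List.nodup_cons] at hqn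
  refine ⟨hp.support_nodup, hqn.2, ?_⟩
  rintro x hxp _ hxq rfl
  have hxq' : x ∈ q.support := by
    rw [q.support_eq_cons]; exact List.mem_cons_of_mem _ hxq
  have hxb := hj x hxp hxq'
  subst hxb
  exact hqn.1 hxq

lemma aux_reachable_of_mem_support {a b x : V} (p : G.Walk a b) (hx : x ∈ p.support) :
    G.Reachable a x := by classical exact ⟨p.takeUntil x hx⟩

lemma aux_bridge_not_reachable {e : Sym2 V} (he : G.IsBridge e) :
    ∀ {a b : V} (p : G.Walk a b), p.IsPath → e ∈ p.edges →
      ¬(G.deleteEdges {e}).Reachable a b := by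
  intro a b p
  induction p with
  | nil => simp
  | @cons a x b hadj q ih =>
    intro hp hmem hreach
    rw [Walk.cons_isPath_iff] at hp
    by_cases heq : e = s(a, x)
    · subst heq
      have hq : ∀ e' ∈ q.edges, e' ∈ (G.deleteEdges {s(a, x)}).edgeSet := by
        intro e' he'
        rw [edgeSet_deleteEdges]
        refine ⟨q.edges_subset_edgeSet he', ?_⟩
        intro hmem'
        rw [Set.mem_singleton_iff] at hmem'
        subst hmem'
        exact hp.2 (q.fst_mem_support_of_mem_edges he')
      have h1 : (G.deleteEdges {s(a, x)}).Reachable x b := ⟨q.transfer _ hq⟩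
      have h2 : (G.deleteEdges {s(a, x)}).Reachable a x := hreach.trans h1.symm
      exact (isBridge_iff.mp he) h2
    · have hmem' : e ∈ q.edges := by
        rcases List.mem_cons.mp (by simpa using hmem) with h | h
        · exact absurd h heq
        · exact h
      have hax : (G.deleteEdges {e}).Adj a x := by
        rw [deleteEdges_adj]
        exact ⟨hadj, by simpa using fun h => heq h.symm⟩
      exact ih hp.1 hmem' ((hax.symm.reachable).trans hreach)

lemma aux_reach_delete_of_walk {s : Set (Sym2 V)} {a b : V} (p : G.Walk a b)
    (h : ∀ e ∈ p.edges, e ∉ s) {x : V} (hx : x ∈ p.support) :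
    (G.deleteEdges s).Reachable a x := by
  have hq : ∀ e ∈ p.edges, e ∈ (G.deleteEdges s).edgeSet := by
    intro e he
    rw [edgeSet_deleteEdges]
    exact ⟨p.edges_subset_edgeSet he, h e he⟩
  classical
  have hx' : x ∈ (p.transfer _ hq).support := by rwa [Walk.support_transfer]
  exact ⟨(p.transfer _ hq).takeUntil x hx'⟩

lemma aux_two_side {T : SimpleGraph V} {α β : V} {f : Sym2 V} (hf : f = s(α, β)) :
    ∀ {a z : V} (_ : T.Walk a z),
      ((T.deleteEdges {f}).Reachable α a ∨ (T.deleteEdges {f}).Reachable β a) →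
      ((T.deleteEdges {f}).Reachable α z ∨ (T.deleteEdges {f}).Reachable β z) := by
  intro a z w
  induction w with
  | nil => exact id
  | @cons a c z hadj q ih =>
    intro hyp
    apply ih
    by_cases he : s(a, c) = f
    · rw [hf] at he
      rcases Sym2.eq_iff.mp he with ⟨ha, hc⟩ | ⟨ha, hc⟩
      · subst hc; exact Or.inr (Reachable.refl _)
      · subst hc; exact Or.inl (Reachable.refl _)
    · have hadj' : (T.deleteEdges {f}).Adj a c := by
        rw [deleteEdges_adj]
        exact ⟨hadj, by simpa using he⟩
      rcases hyp with h | h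
      · exact Or.inl (h.trans hadj'.reachable)
      · exact Or.inr (h.trans hadj'.reachable)

lemma aux_cross_pair {S : Set V} : ∀ {a b : V} (p : G.Walk a b), a ∈ S → b ∉ S →
    ∃ x y, G.Adj x y ∧ s(x, y) ∈ p.edges ∧ x ∈ S ∧ y ∉ S := by
  intro a b p
  induction p with
  | nil => intro h h'; exact absurd h h'
  | @cons a c b hadj q ih =>
    intro ha hb
    by_cases hc : c ∈ S
    · obtain ⟨x, y, h1, h2, h3, h4⟩ := ih hc hb
      exact ⟨x, y, h1, List.mem_cons_of_mem _ h2, h3, h4⟩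
    · exact ⟨a, c, hadj, List.mem_cons_self, ha, hc⟩

lemma aux_dec (P : Sym2 V → Prop) : ∀ {a b : V} (p : G.Walk a b),
    (∀ e ∈ p.edges, ¬P e) ∨
      ∃ (w x : V) (p₁ : G.Walk a w) (hb : G.Adj w x) (p₂ : G.Walk x b),
        p = p₁.append (Walk.cons hb p₂) ∧ (∀ e ∈ p₁.edges, ¬P e) ∧ P s(w, x) := by
  intro a b p
  induction p with
  | nil => exact Or.inl (by simp)
  | @cons a c b hadj q ih =>
    by_cases hP : P s(a, c)
    · exact Or.inr ⟨a, c, Walk.nil, hadj, q, (Walk.nil_append _).symm, by simp, hP⟩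
    · rcases ih with h | ⟨w, x, p₁, hb, p₂, rfl, h₁, h₂⟩
      · left
        intro e he
        rcases List.mem_cons.mp (by simpa using he) with rfl | he'
        · exact hP
        · exact h e he'
      · right
        refine ⟨w, x, Walk.cons hadj p₁, hb, p₂, by rw [Walk.cons_append], ?_, h₂⟩
        intro e he
        rcases List.mem_cons.mp (by simpa using he) with rfl | he'
        · exact hP
        · exact h₁ e he'

lemma aux_lift {S : Set V} : ∀ {a b : V} (q : G.Walk a b) (ha : a ∈ S) (hb : b ∈ S),
    (∀ x ∈ q.support, x ∈ S) →
    ∃ q' : (G.induce S).Walk ⟨a, ha⟩ ⟨b, hb⟩,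
      q'.support.map Subtype.val = q.support ∧
      q'.edges.map (Sym2.map Subtype.val) = q.edges := by
  intro a b q
  induction q with
  | nil => intro ha hb _; exact ⟨Walk.nil, by simp, by simp⟩
  | @cons a c b hadj q ih =>
    intro ha hb hsup
    have hc : c ∈ S := hsup c (by simp)
    obtain ⟨q', h1, h2⟩ := ih hc hb (fun x hx => hsup x (by simp [hx]))
    have hadj' : (G.induce S).Adj ⟨a, ha⟩ ⟨c, hc⟩ := hadj
    refine ⟨Walk.cons hadj' q', ?_, ?_⟩
    · rw [Walk.support_cons, List.map_cons, h1]; rfl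
    · rw [Walk.edges_cons, List.map_cons, h2, Sym2.map_pair_eq]; rfl

end AuxBasics

section AuxB

variable {V : Type u} {G : SimpleGraph V}

lemma aux_edges_ne_nil {a b : V} (p : G.Walk a b) (hab : a ≠ b) : p.edges ≠ [] := by
  cases p with
  | nil => exact absurd rfl hab
  | cons h q => simp [Walk.edges_cons]

lemma aux_cfc_set_nonempty {W : Type u} [Finite W] (H : SimpleGraph W) (hH : H.Connected) :
    {n : ℕ | ∃ c : Sym2 W → ℕ, (∀ e ∈ H.edgeSet, c e < n) ∧ IsCFCColoring H c}.Nonempty := by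
  classical
  have : Fintype W := Fintype.ofFinite W
  refine ⟨Fintype.card (Sym2 W), fun e => (Fintype.equivFin (Sym2 W) e : ℕ),
    fun e _ => (Fintype.equivFin (Sym2 W) e).2, ?_⟩
  intro u v huv
  obtain ⟨w⟩ := hH.preconnected u v
  refine ⟨w.toPath, w.toPath.2, ?_⟩
  obtain ⟨e0, l, hE⟩ := List.exists_cons_of_ne_nil (aux_edges_ne_nil (w.toPath : H.Walk u v) huv)
  refine ⟨(Fintype.equivFin (Sym2 W) e0 : ℕ), ?_⟩
  have hnd : ((w.toPath : H.Walk u v).edges.map (fun e => (Fintype.equivFin (Sym2 W) e : ℕ))).Nodup := by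
    refine List.Nodup.map ?_ (w.toPath.2.isTrail.edges_nodup)
    exact fun x y hxy => (Fintype.equivFin (Sym2 W)).injective (Fin.val_injective hxy)
  refine List.count_eq_one_of_mem hnd ?_
  exact List.mem_map_of_mem (by rw [hE]; exact List.mem_cons_self)

lemma aux_cfcNum_spec {W : Type u} [Finite W] (H : SimpleGraph W) (hH : H.Connected) :
    ∃ c : Sym2 W → ℕ, (∀ e ∈ H.edgeSet, c e < cfcNum H) ∧ IsCFCColoring H c :=
  Nat.sInf_mem (aux_cfc_set_nonempty H hH)

lemma aux_comp_connected {H : SimpleGraph V} (K : H.ConnectedComponent) :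
    (H.induce K.supp).Connected := by
  obtain ⟨v, hv⟩ := Quot.exists_rep K
  have hvK : v ∈ K.supp := by
    rw [SimpleGraph.ConnectedComponent.mem_supp_iff]
    exact hv
  haveI : Nonempty ↑K.supp := ⟨⟨v, hvK⟩⟩
  refine SimpleGraph.Connected.mk ?_
  rintro ⟨x, hx⟩ ⟨y, hy⟩
  have hx' := (SimpleGraph.ConnectedComponent.mem_supp_iff K x).mp hx
  have hy' := (SimpleGraph.ConnectedComponent.mem_supp_iff K y).mp hy
  have hr : H.Reachable x y := SimpleGraph.ConnectedComponent.exact (hx'.trans hy'.symm)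
  obtain ⟨q⟩ := hr
  have hsup : ∀ z ∈ q.support, z ∈ K.supp := by
    intro z hz
    rw [SimpleGraph.ConnectedComponent.mem_supp_iff]
    have := aux_reachable_of_mem_support q hz
    exact (SimpleGraph.ConnectedComponent.sound this).symm.trans hx'
  obtain ⟨q', -, -⟩ := aux_lift q hx hy hsup
  exact ⟨q'⟩

end AuxB

section AuxC
variable {V : Type u} {G : SimpleGraph V}

lemma aux_cutG_adj {x y : V} (h : (cutG G).Adj x y) : G.IsBridge s(x, y) ∧ x ≠ y := by
  rw [cutG, fromEdgeSet_adj] at h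
  exact h

lemma aux_bridge_mem (hconn : G.Connected) {e : Sym2 V} (h : G.IsBridge e) : e ∈ G.edgeSet := by
  induction e using Sym2.ind with
  | _ x y => exact (IsBridge.reachable_iff_adj h).mp (hconn.preconnected x y)

lemma aux_cut_path_unique {a b : V} (hconn : G.Connected) :
    ∀ (q : (cutG G).Walk a b), q.IsPath → ∀ (p : G.Walk a b), p.IsPath → p.edges = q.edges := by
  intro q
  induction q with
  | nil =>
    intro _ p hp
    rw [Walk.isPath_iff_eq_nil.mp hp]
    simp
  | @cons a w b hadj q ih =>
    intro hq p hp
    obtain ⟨hbr, hne_aw⟩ := aux_cutG_adj hadj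
    rw [Walk.cons_isPath_iff] at hq
    have hreach_wb : (G.deleteEdges {s(a, w)}).Reachable w b := by
      have hq' : ∀ e ∈ q.edges, e ∈ (G.deleteEdges {s(a, w)}).edgeSet := by
        intro e he
        have hbr' : G.IsBridge e ∧ ¬e.IsDiag := by
          have := q.edges_subset_edgeSet he
          rw [cutG, edgeSet_fromEdgeSet] at this
          exact this
        rw [edgeSet_deleteEdges]
        refine ⟨aux_bridge_mem hconn hbr'.1, ?_⟩
        intro hmem
        rw [Set.mem_singleton_iff] at hmem
        subst hmem
        exact hq.2 (q.fst_mem_support_of_mem_edges he)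
      exact ⟨q.transfer _ hq'⟩
    have hnot : ¬(G.deleteEdges {s(a, w)}).Reachable a b := by
      intro hcon
      exact (isBridge_iff.mp hbr) (hcon.trans hreach_wb.symm)
    cases p with
    | nil => exact absurd (Reachable.refl a) hnot
    | @cons _ x _ hadj2 r =>
      rw [Walk.cons_isPath_iff] at hp
      by_cases hx : x = w
      · subst hx
        rw [Walk.edges_cons, Walk.edges_cons, ih hq.1 r hp.1]
      · exfalso
        have hne_e : s(a, x) ≠ s(a, w) := by
          intro hcon
          rcases Sym2.eq_iff.mp hcon with ⟨-, h2⟩ | ⟨h1, h2⟩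
          · exact hx h2
          · exact hne_aw h1
        have hr' : ∀ e ∈ r.edges, e ∈ (G.deleteEdges {s(a, w)}).edgeSet := by
          intro e he
          rw [edgeSet_deleteEdges]
          refine ⟨r.edges_subset_edgeSet he, ?_⟩
          intro hmem
          rw [Set.mem_singleton_iff] at hmem
          subst hmem
          exact hp.2 (r.fst_mem_support_of_mem_edges he)
        have h1 : (G.deleteEdges {s(a, w)}).Reachable x b := ⟨r.transfer _ hr'⟩
        have h2 : (G.deleteEdges {s(a, w)}).Adj a x := by
          rw [deleteEdges_adj]
          exact ⟨hadj2, by simpa using hne_e⟩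
        exact hnot (h2.reachable.trans h1)

lemma aux_delete_still_reach {T : SimpleGraph V} {x y : V} {f : Sym2 V} (hf : f = s(x, y))
    (hr : (T.deleteEdges {f}).Reachable x y) {a b : V} (hab : T.Reachable a b) :
    (T.deleteEdges {f}).Reachable a b := by
  obtain ⟨w⟩ := hab
  induction w with
  | nil => exact Reachable.refl _
  | @cons a c b hadj q ih =>
    refine Reachable.trans ?_ ih
    by_cases he : s(a, c) = f
    · rw [hf] at he
      rcases Sym2.eq_iff.mp he with ⟨h1, h2⟩ | ⟨h1, h2⟩
      · subst h1; subst h2; exact hr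
      · subst h1; subst h2; exact hr.symm
    · refine Adj.reachable ?_
      rw [deleteEdges_adj]
      exact ⟨hadj, by simpa using he⟩

lemma aux_min_tree {V : Type u} [Fintype V] (G : SimpleGraph V) (hconn : G.Connected) :
    ∃ E0 : Set (Sym2 V), E0 ⊆ G.edgeSet ∧ (fromEdgeSet E0).Connected ∧
      ∀ f ∈ E0, (fromEdgeSet E0).IsBridge f := by
  classical
  let P : Finset (Sym2 V) → Prop := fun E => ↑E ⊆ G.edgeSet ∧ (fromEdgeSet (↑E : Set (Sym2 V))).Connected
  let N : Set ℕ := {n | ∃ E, P E ∧ E.card = n}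
  have hNne : N.Nonempty := by
    refine ⟨(G.edgeSet.toFinite.toFinset).card, G.edgeSet.toFinite.toFinset, ⟨?_, ?_⟩, rfl⟩
    · rw [Set.Finite.coe_toFinset]
    · rw [Set.Finite.coe_toFinset, fromEdgeSet_edgeSet]; exact hconn
  obtain ⟨E, hPE, hcard⟩ := Nat.sInf_mem hNne
  refine ⟨↑E, hPE.1, hPE.2, ?_⟩
  intro f hf
  have hfE : f ∈ E := hf
  induction f using Sym2.ind with
  | _ x y =>
  have hxy : x ≠ y := by
    intro hcon
    have := G.not_isDiag_of_mem_edgeSet (hPE.1 hf)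
    rw [Sym2.isDiag_iff_proj_eq] at this
    exact this hcon
  rw [isBridge_iff]
  · intro hreach
    -- then E.erase f also works, contradiction with minimality
    have hTTd : (fromEdgeSet (↑E : Set (Sym2 V))).deleteEdges {s(x, y)}
        = fromEdgeSet (↑(E.erase s(x, y)) : Set (Sym2 V)) := by
      ext a b
      rw [deleteEdges_adj, fromEdgeSet_adj, fromEdgeSet_adj, Finset.coe_erase]
      constructor
      · rintro ⟨⟨h1, h2⟩, h3⟩
        exact ⟨⟨h1, by simpa using h3⟩, h2⟩
      · rintro ⟨⟨h1, h3⟩, h2⟩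
        exact ⟨⟨h1, h2⟩, by simpa using h3⟩
    have hconn' : (fromEdgeSet (↑(E.erase s(x, y)) : Set (Sym2 V))).Connected := by
      rw [← hTTd]
      haveI : Nonempty V := hPE.2.nonempty
      refine SimpleGraph.Connected.mk ?_
      intro a b
      exact aux_delete_still_reach rfl (by exact hreach) (hPE.2.preconnected a b)
    have hmem : (E.erase s(x, y)).card ∈ N := by
      refine ⟨E.erase s(x, y), ⟨?_, hconn'⟩, rfl⟩
      intro e he
      simp only [Finset.coe_erase, Set.mem_diff] at he
      exact hPE.1 he.1
    have hle := Nat.sInf_le hmem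
    rw [Finset.card_erase_of_mem hfE] at hle
    have hpos : 1 ≤ E.card := Finset.card_pos.mpr ⟨_, hfE⟩
    omega
  -- need E.card = sInf N > 0 fact for omega? card - 1 < card needs card ≥ 1
end AuxC

section AuxD
variable {V : Type u} {G : SimpleGraph V}

lemma aux_mapLe_edges {G G' : SimpleGraph V} (hle : G ≤ G') {a b : V} (p : G.Walk a b) :
    (p.mapLe hle).edges = p.edges := by
  have h1 : ∀ e : Sym2 V, Sym2.map (⇑(Hom.ofLE hle)) e = e := by
    intro e; induction e using Sym2.ind with | _ x y => rfl
  simp only [Walk.mapLe, Walk.edges_map]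
  exact (List.map_congr_left fun e _ => h1 e).trans (List.map_id _)

lemma aux_mapLe_support {G G' : SimpleGraph V} (hle : G ≤ G') {a b : V} (p : G.Walk a b) :
    (p.mapLe hle).support = p.support := by
  simp only [Walk.mapLe, Walk.support_map]
  exact (List.map_congr_left fun z _ => rfl).trans (List.map_id _)

lemma aux_BF_le_delete {e : Sym2 V} (he : G.IsBridge e) :
    auxBF G ≤ G.deleteEdges {e} :=
  deleteEdges_anti (by simpa using he)

lemma aux_no_bridge_of_BF {u v : V}
    (hr : (auxBF G).Reachable u v) (p : G.Walk u v) (hp : p.IsPath) :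
    ∀ e ∈ p.edges, ¬G.IsBridge e := by
  intro e he hbr
  exact aux_bridge_not_reachable hbr p hp he (hr.mono (aux_BF_le_delete hbr))

lemma aux_BF_reach_of_path {u v : V} (p : G.Walk u v) (hbf : ∀ e ∈ p.edges, ¬G.IsBridge e)
    {x : V} (hx : x ∈ p.support) : (auxBF G).Reachable u x :=
  aux_reach_delete_of_walk p (by simpa using hbf) hx

lemma aux_reach_of_not_bridge {x y : V} (hadj : G.Adj x y) (hnb : ¬G.IsBridge s(x, y)) :
    (G.deleteEdges {s(x, y)}).Reachable x y := by
  by_contra hcon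
  exact hnb (isBridge_iff.mpr hcon)

lemma aux_count_eq_zero {c : Sym2 V → ℕ} {n : ℕ} {l : List (Sym2 V)}
    (h : ∀ e ∈ l, c e ≠ n) : (l.map c).count n = 0 := by
  rw [List.count_eq_zero]
  intro hmem
  obtain ⟨e, he, hce⟩ := List.mem_map.mp hmem
  exact h e he hce

variable {E0 : Set (Sym2 V)} {c : Sym2 V → ℕ} {h : ℕ}

lemma aux_pb (hE0 : E0 ⊆ G.edgeSet) (hTconn : (fromEdgeSet E0).Connected)
    (hc0 : ∀ e ∈ E0, ¬G.IsBridge e → c e = 0)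
    {u v : V} (hr : (auxBF G).Reachable u v) :
    ∃ p : G.Walk u v, p.IsPath ∧ (∀ e ∈ p.edges, ¬G.IsBridge e ∧ c e = 0) ∧
      ∀ x ∈ p.support, (auxBF G).Reachable u x := by
  classical
  have hTle : fromEdgeSet E0 ≤ G := by
    have := fromEdgeSet_mono hE0
    rwa [fromEdgeSet_edgeSet] at this
  obtain ⟨tp0⟩ := hTconn.preconnected u v
  set tp : (fromEdgeSet E0).Walk u v := tp0.toPath.1 with htp
  have htpp : tp.IsPath := tp0.toPath.2
  set p : G.Walk u v := tp.mapLe hTle with hpdef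
  have hpp : p.IsPath := (Walk.mapLe_isPath hTle).mpr htpp
  have hpe : p.edges = tp.edges := aux_mapLe_edges hTle tp
  have hE0mem : ∀ e ∈ p.edges, e ∈ E0 := by
    intro e he
    rw [hpe] at he
    have := tp.edges_subset_edgeSet he
    rw [edgeSet_fromEdgeSet] at this
    exact this.1
  have hnb : ∀ e ∈ p.edges, ¬G.IsBridge e := aux_no_bridge_of_BF hr p hpp
  refine ⟨p, hpp, fun e he => ⟨hnb e he, hc0 e (hE0mem e he) (hnb e he)⟩, ?_⟩
  intro x hx
  exact aux_BF_reach_of_path p hnb hx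

lemma aux_pa (hE0 : E0 ⊆ G.edgeSet) (hTconn : (fromEdgeSet E0).Connected)
    (hTbr : ∀ f ∈ E0, (fromEdgeSet E0).IsBridge f)
    (hc0 : ∀ e ∈ E0, ¬G.IsBridge e → c e = 0)
    (hch : ∀ e ∈ G.edgeSet, e ∉ E0 → ¬G.IsBridge e → c e = h)
    (hh : 1 ≤ h)
    {u v : V} (hr : (auxBF G).Reachable u v) (huv : u ≠ v) :
    ∃ p : G.Walk u v, p.IsPath ∧ (p.edges.map c).count h = 1 ∧
      (∀ e ∈ p.edges, ¬G.IsBridge e) ∧ ∀ x ∈ p.support, (auxBF G).Reachable u x := by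
  classical
  set T : SimpleGraph V := fromEdgeSet E0 with hTdef
  have hTle : T ≤ G := by
    have := fromEdgeSet_mono hE0
    rwa [fromEdgeSet_edgeSet] at this
  obtain ⟨tpex, htpp⟩ : ∃ q : T.Walk u v, q.IsPath := by
    obtain ⟨tp0⟩ := hTconn.preconnected u v
    exact ⟨tp0.toPath.1, tp0.toPath.2⟩
  cases tpex with
  | nil => exact absurd rfl huv
  | @cons _ w1 _ hadj1 tp' =>
    set f : Sym2 V := s(u, w1) with hfdef
    have hfE0 : f ∈ E0 := by
      have : f ∈ T.edgeSet := hadj1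
      rw [hTdef, edgeSet_fromEdgeSet] at this
      exact this.1
    have hGadj1 : G.Adj u w1 := hTle hadj1
    have htpGp : ((Walk.cons hadj1 tp').mapLe hTle).IsPath := (Walk.mapLe_isPath hTle).mpr htpp
    have hnbAll : ∀ e ∈ ((Walk.cons hadj1 tp').mapLe hTle).edges, ¬G.IsBridge e :=
      aux_no_bridge_of_BF hr _ htpGp
    have hfnb : ¬G.IsBridge f := by
      refine hnbAll f ?_
      rw [aux_mapLe_edges, Walk.edges_cons]
      exact List.mem_cons_self
    have hTbrf := hTbr f hfE0
    have hTbf : ¬(T.deleteEdges {f}).Reachable u w1 := (isBridge_iff.mp hTbrf)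
    have hv_not : ¬(T.deleteEdges {f}).Reachable u v := by
      refine aux_bridge_not_reachable hTbrf (Walk.cons hadj1 tp') htpp ?_
      rw [Walk.edges_cons]; exact List.mem_cons_self
    have hGf : (G.deleteEdges {f}).Reachable u w1 := aux_reach_of_not_bridge hGadj1 hfnb
    obtain ⟨qD, hqDp⟩ : ∃ q : (G.deleteEdges {f}).Walk u w1, q.IsPath := by
      obtain ⟨q0⟩ := hGf
      exact ⟨q0.toPath.1, q0.toPath.2⟩
    set q : G.Walk u w1 := qD.mapLe (deleteEdges_le _) with hqdef
    have hqp : q.IsPath := (Walk.mapLe_isPath _).mpr hqDp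
    have hqe : q.edges = qD.edges := aux_mapLe_edges _ qD
    have hqnotf : ∀ e ∈ q.edges, e ≠ f := by
      intro e he
      rw [hqe] at he
      have := qD.edges_subset_edgeSet he
      rw [edgeSet_deleteEdges] at this
      simpa using this.2
    have hBFuw1 : (auxBF G).Reachable u w1 := by
      refine Adj.reachable ?_
      show (G.deleteEdges {e | G.IsBridge e}).Adj u w1
      rw [deleteEdges_adj]
      exact ⟨hGadj1, by simpa using hfnb⟩
    have hqnb : ∀ e ∈ q.edges, ¬G.IsBridge e := aux_no_bridge_of_BF hBFuw1 q hqp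
    set Tu : Set V := {z | (T.deleteEdges {f}).Reachable u z} with hTudef
    have huTu : u ∈ Tu := Reachable.refl u
    have hw1Tu : w1 ∉ Tu := hTbf
    have hvTu : v ∉ Tu := hv_not
    obtain ⟨x, y, hxy, hmemq, hxTu, hyTu⟩ := aux_cross_pair q huTu hw1Tu
    have hexy_nb : ¬G.IsBridge s(x, y) := hqnb _ hmemq
    have hexy_nE0 : s(x, y) ∉ E0 := by
      intro hmem
      have hTadj : (T.deleteEdges {f}).Adj x y := by
        rw [deleteEdges_adj, hTdef, fromEdgeSet_adj]
        refine ⟨⟨hmem, hxy.ne⟩, by simpa using hqnotf _ hmemq⟩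
      exact hyTu (hxTu.trans hTadj.reachable)
    have hcxy : c s(x, y) = h := hch _ (by rw [mem_edgeSet]; exact hxy) hexy_nE0 hexy_nb
    have hBFx : (auxBF G).Reachable u x :=
      aux_BF_reach_of_path q hqnb (q.fst_mem_support_of_mem_edges hmemq)
    have hBFy : (auxBF G).Reachable u y :=
      aux_BF_reach_of_path q hqnb (q.snd_mem_support_of_mem_edges hmemq)
    -- p1 : path u → x in T-f
    obtain ⟨p1, hp1p⟩ : ∃ r : (T.deleteEdges {f}).Walk u x, r.IsPath := by
      obtain ⟨r0⟩ := hxTu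
      exact ⟨r0.toPath.1, r0.toPath.2⟩
    have hTfle : T.deleteEdges {f} ≤ G := (deleteEdges_le _).trans hTle
    set p1G : G.Walk u x := p1.mapLe hTfle with hp1def
    have hp1Gp : p1G.IsPath := (Walk.mapLe_isPath _).mpr hp1p
    have hp1e : p1G.edges = p1.edges := aux_mapLe_edges _ p1
    have hp1s : p1G.support = p1.support := aux_mapLe_support _ p1
    have hp1Tu : ∀ z ∈ p1G.support, z ∈ Tu := by
      intro z hz
      rw [hp1s] at hz
      exact aux_reachable_of_mem_support p1 hz
    have hp1E0 : ∀ e ∈ p1G.edges, e ∈ E0 := by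
      intro e he
      rw [hp1e] at he
      have := p1.edges_subset_edgeSet he
      rw [edgeSet_deleteEdges, hTdef, edgeSet_fromEdgeSet] at this
      exact this.1.1
    have hp1nb : ∀ e ∈ p1G.edges, ¬G.IsBridge e := aux_no_bridge_of_BF hBFx p1G hp1Gp
    have hp1c : ∀ e ∈ p1G.edges, c e = 0 := fun e he => hc0 e (hp1E0 e he) (hp1nb e he)
    -- p2 : path y → v in T-f
    have htwoside : ∀ z : V, z ∉ Tu → (T.deleteEdges {f}).Reachable w1 z := by
      intro z hz
      obtain ⟨wz⟩ := hTconn.preconnected u z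
      rcases aux_two_side (hfdef) wz (Or.inl (Reachable.refl u)) with hl | hr2
      · exact absurd hl hz
      · exact hr2
    have hyv : (T.deleteEdges {f}).Reachable y v := ((htwoside y hyTu).symm.trans (htwoside v hvTu))
    obtain ⟨p2, hp2p⟩ : ∃ r : (T.deleteEdges {f}).Walk y v, r.IsPath := by
      obtain ⟨r0⟩ := hyv
      exact ⟨r0.toPath.1, r0.toPath.2⟩
    set p2G : G.Walk y v := p2.mapLe hTfle with hp2def
    have hp2Gp : p2G.IsPath := (Walk.mapLe_isPath _).mpr hp2p
    have hp2e : p2G.edges = p2.edges := aux_mapLe_edges _ p2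
    have hp2s : p2G.support = p2.support := aux_mapLe_support _ p2
    have hp2notTu : ∀ z ∈ p2G.support, z ∉ Tu := by
      intro z hz hzTu
      rw [hp2s] at hz
      have h1 : (T.deleteEdges {f}).Reachable y z := aux_reachable_of_mem_support p2 hz
      exact hyTu (hzTu.trans h1.symm)
    have hp2E0 : ∀ e ∈ p2G.edges, e ∈ E0 := by
      intro e he
      rw [hp2e] at he
      have := p2.edges_subset_edgeSet he
      rw [edgeSet_deleteEdges, hTdef, edgeSet_fromEdgeSet] at this
      exact this.1.1
    have hBFyv : (auxBF G).Reachable y v := hBFy.symm.trans hr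
    have hp2nb : ∀ e ∈ p2G.edges, ¬G.IsBridge e := aux_no_bridge_of_BF hBFyv p2G hp2Gp
    have hp2c : ∀ e ∈ p2G.edges, c e = 0 := fun e he => hc0 e (hp2E0 e he) (hp2nb e he)
    -- assemble
    have hinner : (Walk.cons hxy p2G).IsPath := by
      rw [Walk.cons_isPath_iff]
      exact ⟨hp2Gp, fun hcon => hp2notTu x hcon hxTu⟩
    have hpath : (p1G.append (Walk.cons hxy p2G)).IsPath := by
      refine aux_isPath_append hp1Gp hinner ?_
      intro z hz1 hz2
      rw [Walk.support_cons] at hz2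
      rcases List.mem_cons.mp hz2 with rfl | hz2'
      · rfl
      · exact absurd (hp1Tu z hz1) (hp2notTu z hz2')
    refine ⟨p1G.append (Walk.cons hxy p2G), hpath, ?_, ?_, ?_⟩
    · rw [Walk.edges_append, Walk.edges_cons, List.map_append, List.map_cons,
        List.count_append, List.count_cons]
      rw [aux_count_eq_zero (fun e he => by rw [hp1c e he]; omega),
        aux_count_eq_zero (fun e he => by rw [hp2c e he]; omega), hcxy]
      simp
    · intro e he
      rw [Walk.edges_append, Walk.edges_cons] at he
      rcases List.mem_append.mp he with he1 | he2
      · exact hp1nb e he1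
      · rcases List.mem_cons.mp he2 with rfl | he3
        · exact hexy_nb
        · exact hp2nb e he3
    · intro z hz
      rcases (Walk.mem_support_append_iff _ _).mp hz with hz1 | hz2
      · exact aux_BF_reach_of_path p1G hp1nb hz1
      · rw [Walk.support_cons] at hz2
        rcases List.mem_cons.mp hz2 with rfl | hz3
        · exact hBFx
        · exact hBFy.trans (aux_BF_reach_of_path p2G hp2nb hz3)

lemma aux_block_meet {a y : V} (α : G.Walk a y) (hα : α.IsPath)
    (hbr : ∀ e ∈ α.edges, G.IsBridge e) :
    ∀ z ∈ α.support, (auxBF G).Reachable y z → z = y := by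
  classical
  intro z hz hrz
  by_contra hne
  obtain ⟨d, hdp, hde⟩ : ∃ d : G.Walk z y, d.IsPath ∧ d.edges ⊆ α.edges :=
    ⟨α.dropUntil z hz, hα.dropUntil hz, α.edges_dropUntil_subset hz⟩
  cases d with
  | nil => exact hne rfl
  | @cons _ z1 _ hadj d' =>
    rw [Walk.cons_isPath_iff] at hdp
    have hb' : G.IsBridge s(z, z1) := hbr _ (hde (by rw [Walk.edges_cons]; exact List.mem_cons_self))
    have hnotin : s(z, z1) ∉ d'.edges := by
      intro hcon
      exact hdp.2 (d'.fst_mem_support_of_mem_edges hcon)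
    have h1 : (G.deleteEdges {s(z, z1)}).Reachable z1 y := by
      refine aux_reach_delete_of_walk d' ?_ d'.end_mem_support
      intro e he
      simp only [Set.mem_singleton_iff]
      intro hcon; subst hcon; exact hnotin he
    have h2 : (G.deleteEdges {s(z, z1)}).Reachable y z := hrz.mono (aux_BF_le_delete hb')
    exact (isBridge_iff.mp hb') (h2.symm.trans h1.symm)

lemma aux_zl (hE0 : E0 ⊆ G.edgeSet) (hTconn : (fromEdgeSet E0).Connected)
    (hc0 : ∀ e ∈ E0, ¬G.IsBridge e → c e = 0)
    (hcb : ∀ e, G.IsBridge e → c e < h) (hh : 1 ≤ h) :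
    ∀ (n : ℕ) {s0 v : V} (p : G.Walk s0 v), p.length ≤ n → p.IsPath →
    ∃ r : G.Walk s0 v, r.IsPath ∧ (∀ e ∈ r.edges, c e ≠ h) ∧
      ∀ x ∈ r.support, ∃ y ∈ p.support, (auxBF G).Reachable y x := by
  intro n
  induction n with
  | zero =>
    intro s0 v p hlen hp
    rcases aux_dec G.IsBridge p with hall | ⟨w, x, p₁, hb, p₂, heq, h₁nb, hbr⟩
    · have hr : (auxBF G).Reachable s0 v := aux_BF_reach_of_path p hall p.end_mem_support
      obtain ⟨r, hrp, hre, hrs⟩ := aux_pb hE0 hTconn hc0 hr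
      refine ⟨r, hrp, fun e he => by rw [(hre e he).2]; omega, ?_⟩
      intro z hz
      exact ⟨s0, p.start_mem_support, hrs z hz⟩
    · exfalso
      have := congrArg Walk.length heq
      rw [Walk.length_append, Walk.length_cons] at this
      omega
  | succ n ih =>
    intro s0 v p hlen hp
    rcases aux_dec G.IsBridge p with hall | ⟨w, x, p₁, hb, p₂, heq, h₁nb, hbr⟩
    · have hr : (auxBF G).Reachable s0 v := aux_BF_reach_of_path p hall p.end_mem_support
      obtain ⟨r, hrp, hre, hrs⟩ := aux_pb hE0 hTconn hc0 hr
      refine ⟨r, hrp, fun e he => by rw [(hre e he).2]; omega, ?_⟩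
      intro z hz
      exact ⟨s0, p.start_mem_support, hrs z hz⟩
    · subst heq
      have hp1 : p₁.IsPath := hp.of_append_left
      have hpc : (Walk.cons hb p₂).IsPath := hp.of_append_right
      have hp2 : p₂.IsPath := hpc.of_cons
      have hlen2 : p₂.length ≤ n := by
        rw [Walk.length_append, Walk.length_cons] at hlen
        omega
      obtain ⟨r₂, hr₂p, hr₂e, hr₂s⟩ := ih p₂ hlen2 hp2
      have hBFsw : (auxBF G).Reachable s0 w := aux_BF_reach_of_path p₁ h₁nb p₁.end_mem_support
      obtain ⟨r₁, hr₁p, hr₁e, hr₁s⟩ := aux_pb hE0 hTconn hc0 hBFsw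
      have hbnotp₂ : s(w, x) ∉ p₂.edges := by
        have hnd := hp.isTrail.edges_nodup
        rw [Walk.edges_append, Walk.edges_cons, List.nodup_append] at hnd
        have := hnd.2.1
        rw [List.nodup_cons] at this
        exact this.1
      have hxside : ∀ yy ∈ p₂.support, (G.deleteEdges {s(w, x)}).Reachable x yy := by
        intro yy hyy
        refine aux_reach_delete_of_walk p₂ ?_ hyy
        intro e he
        simp only [Set.mem_singleton_iff]
        intro hcon; subst hcon; exact hbnotp₂ he
      have hr₂side : ∀ z ∈ r₂.support, (G.deleteEdges {s(w, x)}).Reachable x z := by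
        intro z hz
        obtain ⟨y, hy, hBF⟩ := hr₂s z hz
        exact (hxside y hy).trans (hBF.mono (aux_BF_le_delete hbr))
      have hwside : ∀ z ∈ r₁.support, (G.deleteEdges {s(w, x)}).Reachable w z := by
        intro z hz
        have h1 := (hr₁s z hz)
        exact ((hBFsw.symm.trans h1).mono (aux_BF_le_delete hbr))
      have hnotwx : ¬(G.deleteEdges {s(w, x)}).Reachable w x := (isBridge_iff.mp hbr)
      have hdisj : ∀ z, (G.deleteEdges {s(w, x)}).Reachable w z →
          (G.deleteEdges {s(w, x)}).Reachable x z → False := by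
        intro z h1 h2
        exact hnotwx (h1.trans h2.symm)
      have hinner : (Walk.cons hb r₂).IsPath := by
        rw [Walk.cons_isPath_iff]
        refine ⟨hr₂p, fun hcon => hdisj w (Reachable.refl w) (hr₂side w hcon)⟩
      have hpath : (r₁.append (Walk.cons hb r₂)).IsPath := by
        refine aux_isPath_append hr₁p hinner ?_
        intro z hz1 hz2
        rw [Walk.support_cons] at hz2
        rcases List.mem_cons.mp hz2 with rfl | hz3
        · rfl
        · exact absurd (hr₂side z hz3) (fun hcon => hdisj z (hwside z hz1) hcon)
      refine ⟨r₁.append (Walk.cons hb r₂), hpath, ?_, ?_⟩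
      · intro e he
        rw [Walk.edges_append, Walk.edges_cons] at he
        rcases List.mem_append.mp he with he1 | he2
        · rw [(hr₁e e he1).2]; omega
        · rcases List.mem_cons.mp he2 with rfl | he3
          · exact Nat.ne_of_lt (hcb _ hbr)
          · exact hr₂e e he3
      · intro z hz
        rcases (Walk.mem_support_append_iff _ _).mp hz with hz1 | hz2
        · exact ⟨s0, Walk.start_mem_support _, hr₁s z hz1⟩
        · rw [Walk.support_cons] at hz2
          have hwp : w ∈ (p₁.append (Walk.cons hb p₂)).support := by
            rw [Walk.mem_support_append_iff]
            exact Or.inl p₁.end_mem_support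
          rcases List.mem_cons.mp hz2 with rfl | hz3
          · exact ⟨z, hwp, Reachable.refl z⟩
          · obtain ⟨y, hy, hBF⟩ := hr₂s z hz3
            refine ⟨y, ?_, hBF⟩
            rw [Walk.mem_support_append_iff, Walk.support_cons]
            exact Or.inr (List.mem_cons_of_mem _ hy)

lemma aux_main
    (hE0 : E0 ⊆ G.edgeSet) (hTconn : (fromEdgeSet E0).Connected)
    (hTbr : ∀ f ∈ E0, (fromEdgeSet E0).IsBridge f)
    (hc0 : ∀ e ∈ E0, ¬G.IsBridge e → c e = 0)
    (hch : ∀ e ∈ G.edgeSet, e ∉ E0 → ¬G.IsBridge e → c e = h)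
    (hcb : ∀ e, G.IsBridge e → c e < h) (hh : 1 ≤ h)
    (hcfcK : ∀ (K : (cutG G).ConnectedComponent) (u' v' : ↥K.supp), u' ≠ v' →
      ∃ q : ((cutG G).induce K.supp).Walk u' v', q.IsPath ∧
        ∃ col, ((q.edges.map (Sym2.map Subtype.val)).map c).count col = 1)
    {u v : V} (huv : u ≠ v) (p : G.Walk u v) (hp : p.IsPath) :
    ∃ r : G.Walk u v, r.IsPath ∧ ∃ col, (r.edges.map c).count col = 1 := by
  classical
  rcases aux_dec (fun e => ¬G.IsBridge e) p with hall | ⟨y, z, β, hg, γ, heq, hβnn, hgnb⟩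
  · -- all edges are bridges
    have hβ : ∀ e ∈ p.edges, G.IsBridge e := fun e he => not_not.mp (hall e he)
    have hcut : ∀ e ∈ p.edges, e ∈ (cutG G).edgeSet := by
      intro e he
      rw [cutG, edgeSet_fromEdgeSet]
      exact ⟨hβ e he, G.not_isDiag_of_mem_edgeSet (p.edges_subset_edgeSet he)⟩
    have hreach : (cutG G).Reachable u v := ⟨p.transfer _ hcut⟩
    set K := (cutG G).connectedComponentMk u with hKdef
    have hu : u ∈ K.supp := by rw [SimpleGraph.ConnectedComponent.mem_supp_iff]
    have hv : v ∈ K.supp := by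
      rw [SimpleGraph.ConnectedComponent.mem_supp_iff, hKdef]
      exact (SimpleGraph.ConnectedComponent.sound hreach).symm
    obtain ⟨q, hqp, col, hqc⟩ :=
      hcfcK K ⟨u, hu⟩ ⟨v, hv⟩ (fun hcon => huv (congrArg Subtype.val hcon))
    have homrel : ∀ {a b : ↥K.supp}, ((cutG G).induce K.supp).Adj a b → G.Adj ↑a ↑b := by
      intro a b hab
      have h1 : (cutG G).Adj ↑a ↑b := hab
      have hTle : fromEdgeSet E0 ≤ G := by
        have := fromEdgeSet_mono hE0
        rwa [fromEdgeSet_edgeSet] at this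
      exact (IsBridge.reachable_iff_adj (aux_cutG_adj h1).1).mp ((hTconn.preconnected _ _).mono hTle)
    refine ⟨q.map ⟨Subtype.val, fun hab => homrel hab⟩,
      Walk.map_isPath_of_injective Subtype.val_injective hqp, col, ?_⟩
    rw [Walk.edges_map]
    exact hqc
  · -- p = β ++ (y~z) ++ γ with β all bridges, s(y,z) not a bridge
    have hβbr : ∀ e ∈ β.edges, G.IsBridge e := fun e he => not_not.mp (hβnn e he)
    subst heq
    have hβp : β.IsPath := hp.of_append_left
    have hcγ : (Walk.cons hg γ).IsPath := hp.of_append_right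
    have hyv : y ≠ v := by
      intro hcon
      have h1 := ((Walk.cons_isPath_iff hg γ).mp hcγ).2
      exact h1 (hcon ▸ γ.end_mem_support)
    rcases aux_dec G.IsBridge (Walk.cons hg γ) with hall2 | ⟨w₂, x₂, σ, hb₂, δ, heq2, hσnb, hbr₂⟩
    · -- no bridge after y : single block segment to v
      have hBFyv : (auxBF G).Reachable y v :=
        aux_BF_reach_of_path (Walk.cons hg γ) hall2 (Walk.end_mem_support _)
      obtain ⟨R, hRp, hRc, hRnb, hRs⟩ := aux_pa hE0 hTconn hTbr hc0 hch hh hBFyv hyv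
      have hpath : (β.append R).IsPath := by
        refine aux_isPath_append hβp hRp ?_
        intro t ht1 ht2
        exact aux_block_meet β hβp hβbr t ht1 (hRs t ht2)
      refine ⟨β.append R, hpath, h, ?_⟩
      rw [Walk.edges_append, List.map_append, List.count_append,
        aux_count_eq_zero (fun e he => Nat.ne_of_lt (hcb e (hβbr e he))), hRc]
    · -- bridge after the block segment
      have hcγ2 : (σ.append (Walk.cons hb₂ δ)).IsPath := heq2 ▸ hcγ
      have hσp := hcγ2.of_append_left
      have hδp := (hcγ2.of_append_right).of_cons
      have hyw₂ : y ≠ w₂ := by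
        intro hcon
        subst hcon
        have hσnil : σ = Walk.nil := Walk.isPath_iff_eq_nil.mp hσp
        subst hσnil
        have hedges := congrArg Walk.edges heq2
        rw [Walk.nil_append, Walk.edges_cons, Walk.edges_cons] at hedges
        simp only [List.cons.injEq] at hedges
        exact hgnb (hedges.1 ▸ hbr₂)
      have hBFyw₂ : (auxBF G).Reachable y w₂ :=
        aux_BF_reach_of_path σ hσnb σ.end_mem_support
      obtain ⟨R, hRp, hRc, hRnb, hRs⟩ := aux_pa hE0 hTconn hTbr hc0 hch hh hBFyw₂ hyw₂
      obtain ⟨Z, hZp, hZe, hZs⟩ := aux_zl hE0 hTconn hc0 hcb hh δ.length δ le_rfl hδp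
      have hnd : (β.edges ++ (σ.edges ++ s(w₂, x₂) :: δ.edges)).Nodup := by
        have h1 := hp.isTrail.edges_nodup
        rw [Walk.edges_append, heq2, Walk.edges_append, Walk.edges_cons] at h1
        exact h1
      have hb₂β : s(w₂, x₂) ∉ β.edges := by
        rw [List.nodup_append] at hnd
        intro hcon
        exact hnd.2.2 _ hcon _ (by simp) rfl
      have hb₂δ : s(w₂, x₂) ∉ δ.edges := by
        rw [List.nodup_append] at hnd
        have h2 := hnd.2.1
        rw [List.nodup_append] at h2
        have h3 := h2.2.1
        rw [List.nodup_cons] at h3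
        exact h3.1
      have hGbyw₂ : (G.deleteEdges {s(w₂, x₂)}).Reachable y w₂ :=
        hBFyw₂.mono (aux_BF_le_delete hbr₂)
      have hβside : ∀ t ∈ β.support, (G.deleteEdges {s(w₂, x₂)}).Reachable w₂ t := by
        intro t ht
        have hd : (G.deleteEdges {s(w₂, x₂)}).Reachable t y := by
          refine aux_reach_delete_of_walk (β.dropUntil t ht) ?_ (Walk.end_mem_support _)
          intro e he
          simp only [Set.mem_singleton_iff]
          intro hcon; subst hcon
          exact hb₂β (β.edges_dropUntil_subset ht he)
        exact hGbyw₂.symm.trans hd.symm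
      have hRside : ∀ t ∈ R.support, (G.deleteEdges {s(w₂, x₂)}).Reachable w₂ t :=
        fun t ht => hGbyw₂.symm.trans ((hRs t ht).mono (aux_BF_le_delete hbr₂))
      have hδside : ∀ yy ∈ δ.support, (G.deleteEdges {s(w₂, x₂)}).Reachable x₂ yy := by
        intro yy hyy
        refine aux_reach_delete_of_walk δ ?_ hyy
        intro e he
        simp only [Set.mem_singleton_iff]
        intro hcon; subst hcon; exact hb₂δ he
      have hZside : ∀ t ∈ Z.support, (G.deleteEdges {s(w₂, x₂)}).Reachable x₂ t := by
        intro t ht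
        obtain ⟨yy, hyy, hBF⟩ := hZs t ht
        exact (hδside yy hyy).trans (hBF.mono (aux_BF_le_delete hbr₂))
      have hnotw₂x₂ : ¬(G.deleteEdges {s(w₂, x₂)}).Reachable w₂ x₂ := (isBridge_iff.mp hbr₂)
      have hdisj : ∀ t, (G.deleteEdges {s(w₂, x₂)}).Reachable w₂ t →
          (G.deleteEdges {s(w₂, x₂)}).Reachable x₂ t → False := by
        intro t h1 h2
        exact hnotw₂x₂ (h1.trans h2.symm)
      have hinner2 : (Walk.cons hb₂ Z).IsPath := by
        rw [Walk.cons_isPath_iff]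
        exact ⟨hZp, fun hcon => hdisj w₂ (Reachable.refl w₂) (hZside w₂ hcon)⟩
      have hinner : (R.append (Walk.cons hb₂ Z)).IsPath := by
        refine aux_isPath_append hRp hinner2 ?_
        intro t ht1 ht2
        rw [Walk.support_cons] at ht2
        rcases List.mem_cons.mp ht2 with rfl | ht3
        · rfl
        · exact absurd (hZside t ht3) (fun hcon => hdisj t (hRside t ht1) hcon)
      have hpath : (β.append (R.append (Walk.cons hb₂ Z))).IsPath := by
        refine aux_isPath_append hβp hinner ?_
        intro t ht1 ht2
        rcases (Walk.mem_support_append_iff _ _).mp ht2 with ht3 | ht4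
        · exact aux_block_meet β hβp hβbr t ht1 (hRs t ht3)
        · rw [Walk.support_cons] at ht4
          rcases List.mem_cons.mp ht4 with rfl | ht5
          · exact absurd (aux_block_meet β hβp hβbr t ht1 hBFyw₂) (fun hcon => hyw₂ hcon.symm)
          · exact absurd (hZside t ht5) (fun hcon => hdisj t (hβside t ht1) hcon)
      refine ⟨β.append (R.append (Walk.cons hb₂ Z)), hpath, h, ?_⟩
      rw [Walk.edges_append, Walk.edges_append, Walk.edges_cons, List.map_append,
        List.map_append, List.map_cons, List.count_append, List.count_append,
        List.count_cons,
        aux_count_eq_zero (fun e he => Nat.ne_of_lt (hcb e (hβbr e he))), hRc,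
        aux_count_eq_zero hZe]
      have hcb₂ : c s(w₂, x₂) ≠ h := Nat.ne_of_lt (hcb _ hbr₂)
      simp [hcb₂, Ne.symm hcb₂]

end AuxD

section Final
variable {V : Type u}

lemma aux_lower [Fintype V] (G : SimpleGraph V) (hconn : G.Connected) :
    hG G ≤ cfcNum G := by
  classical
  have hSne : {n : ℕ | ∃ c : Sym2 V → ℕ, (∀ e ∈ G.edgeSet, c e < n) ∧ IsCFCColoring G c}.Nonempty :=
    aux_cfc_set_nonempty G hconn
  haveI : Nonempty V := hconn.nonempty
  haveI : Nonempty (cutG G).ConnectedComponent :=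
    ⟨(cutG G).connectedComponentMk Classical.ofNonempty⟩
  rw [hG]
  apply csSup_le (Set.range_nonempty _)
  rintro k ⟨K, rfl⟩
  apply le_csInf hSne
  rintro n ⟨cc, hbound, hcfc⟩
  apply Nat.sInf_le
  refine ⟨fun ee => cc (Sym2.map Subtype.val ee), ?_, ?_⟩
  · intro ee hee
    apply hbound
    induction ee using Sym2.ind with
    | _ a b =>
      have hadj : ((cutG G).induce K.supp).Adj a b := hee
      have h1 : (cutG G).Adj ↑a ↑b := hadj
      rw [Sym2.map_pair_eq]
      exact aux_bridge_mem hconn (aux_cutG_adj h1).1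
  · intro u' v' hne
    have hval : (u' : V) ≠ v' := fun hcon => hne (Subtype.ext hcon)
    obtain ⟨p, hp, col, hcol⟩ := hcfc u' v' hval
    have hreach : (cutG G).Reachable ↑u' ↑v' := by
      refine SimpleGraph.ConnectedComponent.exact ?_
      have h1 := (SimpleGraph.ConnectedComponent.mem_supp_iff K u').mp u'.2
      have h2 := (SimpleGraph.ConnectedComponent.mem_supp_iff K v').mp v'.2
      exact h1.trans h2.symm
    obtain ⟨q0⟩ := hreach
    have hqp : (q0.toPath.1 : (cutG G).Walk ↑u' ↑v').IsPath := q0.toPath.2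
    have hedges : p.edges = (q0.toPath.1 : (cutG G).Walk ↑u' ↑v').edges :=
      aux_cut_path_unique hconn q0.toPath.1 hqp p hp
    have hsupp : ∀ x ∈ (q0.toPath.1 : (cutG G).Walk ↑u' ↑v').support, x ∈ K.supp := by
      intro x hx
      rw [SimpleGraph.ConnectedComponent.mem_supp_iff]
      have h3 := aux_reachable_of_mem_support q0.toPath.1 hx
      have h1 := (SimpleGraph.ConnectedComponent.mem_supp_iff K u').mp u'.2
      exact (SimpleGraph.ConnectedComponent.sound h3).symm.trans h1
    obtain ⟨q', hq's, hq'e⟩ := aux_lift q0.toPath.1 u'.2 v'.2 hsupp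
    refine ⟨q', ?_, col, ?_⟩
    · rw [Walk.isPath_def]
      have h4 : (q'.support.map Subtype.val).Nodup := by rw [hq's]; exact hqp.support_nodup
      exact h4.of_map
    · rw [show (q'.edges.map fun ee => cc (Sym2.map Subtype.val ee))
          = (q'.edges.map (Sym2.map Subtype.val)).map cc by rw [List.map_map]; rfl]
      rw [hq'e, ← hedges]
      exact hcol

lemma aux_upper [Fintype V] (G : SimpleGraph V) (hconn : G.Connected)
    (hbridge : ∃ e, G.IsBridge e) : cfcNum G ≤ hG G + 1 := by
  classical
  haveI : Nonempty V := hconn.nonempty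
  obtain ⟨E0, hE0, hTconn, hTbr⟩ := aux_min_tree G hconn
  have hKspec : ∀ K : (cutG G).ConnectedComponent,
      ∃ cc : Sym2 ↥K.supp → ℕ,
        (∀ ee ∈ ((cutG G).induce K.supp).edgeSet, cc ee < cfcNum ((cutG G).induce K.supp)) ∧
        IsCFCColoring ((cutG G).induce K.supp) cc :=
    fun K => aux_cfcNum_spec _ (aux_comp_connected K)
  choose cK hcKlt hcKcfc using hKspec
  have hbdd : BddAbove (Set.range fun K : (cutG G).ConnectedComponent =>
      cfcNum ((cutG G).induce K.supp)) := (Set.finite_range _).bddAbove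
  have hKle : ∀ K : (cutG G).ConnectedComponent,
      cfcNum ((cutG G).induce K.supp) ≤ hG G := fun K => by
    rw [hG]; exact le_csSup hbdd ⟨K, rfl⟩
  set h := hG G with hhdef
  -- the global coloring
  set cc : Sym2 V → ℕ := fun e =>
    if G.IsBridge e then
      sSup {m | ∃ (K : (cutG G).ConnectedComponent) (ee : Sym2 ↥K.supp),
        Sym2.map Subtype.val ee = e ∧ ee ∈ ((cutG G).induce K.supp).edgeSet ∧ cK K ee = m}
    else if e ∈ E0 then 0 else if e ∈ G.edgeSet then h else 0 with hccdef
  have hKeq : ∀ (K K' : (cutG G).ConnectedComponent) (hKK : K = K')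
      (ee : Sym2 ↥K.supp) (ee' : Sym2 ↥K'.supp),
      Sym2.map Subtype.val ee = Sym2.map Subtype.val ee' → cK K ee = cK K' ee' := by
    intro K K' hKK
    subst hKK
    intro ee ee' hmap
    have : ee = ee' := Sym2.map.injective Subtype.val_injective hmap
    rw [this]
  have hcompat : ∀ (K : (cutG G).ConnectedComponent) (ee : Sym2 ↥K.supp),
      ee ∈ ((cutG G).induce K.supp).edgeSet → cc (Sym2.map Subtype.val ee) = cK K ee := by
    intro K ee hee
    induction ee using Sym2.ind with
    | _ a b =>
    have hadj : ((cutG G).induce K.supp).Adj a b := hee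
    have h1 : (cutG G).Adj ↑a ↑b := hadj
    have hbr : G.IsBridge (Sym2.map Subtype.val s(a, b)) := by
      rw [Sym2.map_pair_eq]; exact (aux_cutG_adj h1).1
    rw [hccdef]
    simp only [if_pos hbr]
    have hset : {m | ∃ (K' : (cutG G).ConnectedComponent) (ee' : Sym2 ↥K'.supp),
        Sym2.map Subtype.val ee' = Sym2.map Subtype.val s(a, b) ∧
        ee' ∈ ((cutG G).induce K'.supp).edgeSet ∧ cK K' ee' = m} = {cK K s(a, b)} := by
      ext m
      simp only [Set.mem_setOf_eq, Set.mem_singleton_iff]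
      constructor
      · rintro ⟨K', ee', hmap, hee', rfl⟩
        induction ee' using Sym2.ind with
        | _ a' b' =>
        have hK'K : K' = K := by
          have h2 := (SimpleGraph.ConnectedComponent.mem_supp_iff K' a').mp a'.2
          have hmap2 := hmap
          rw [Sym2.map_pair_eq, Sym2.map_pair_eq] at hmap2
          rcases Sym2.eq_iff.mp hmap2 with ⟨h3, -⟩ | ⟨h3, -⟩
          · have h4 := (SimpleGraph.ConnectedComponent.mem_supp_iff K a).mp a.2
            rw [← h2, ← h4]; exact congrArg _ h3
          · have h4 := (SimpleGraph.ConnectedComponent.mem_supp_iff K b).mp b.2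
            rw [← h2, ← h4]; exact congrArg _ h3
        exact hKeq K' K hK'K _ _ hmap
      · rintro rfl
        exact ⟨K, s(a, b), rfl, hee, rfl⟩
    rw [hset, csSup_singleton]
  have hcbr : ∀ e, G.IsBridge e → cc e < h := by
    intro e hbr
    induction e using Sym2.ind with
    | _ x y =>
    have hxy : x ≠ y := by
      intro hcon
      have hd := G.not_isDiag_of_mem_edgeSet (aux_bridge_mem hconn hbr)
      rw [Sym2.isDiag_iff_proj_eq] at hd; exact hd hcon
    have hadj : (cutG G).Adj x y := by
      rw [cutG, fromEdgeSet_adj]; exact ⟨hbr, hxy⟩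
    have hx : x ∈ ((cutG G).connectedComponentMk x).supp := by
      rw [SimpleGraph.ConnectedComponent.mem_supp_iff]
    have hy : y ∈ ((cutG G).connectedComponentMk x).supp := by
      rw [SimpleGraph.ConnectedComponent.mem_supp_iff]
      exact ((SimpleGraph.ConnectedComponent.sound hadj.reachable)).symm
    have hee : s((⟨x, hx⟩ : ↥((cutG G).connectedComponentMk x).supp), ⟨y, hy⟩)
        ∈ ((cutG G).induce ((cutG G).connectedComponentMk x).supp).edgeSet := by
      rw [mem_edgeSet]
      exact hadj
    have hcv := hcompat _ _ hee
    rw [Sym2.map_pair_eq] at hcv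
    rw [hcv]
    exact lt_of_lt_of_le (hcKlt _ _ hee) (hKle _)
  have hh1 : 1 ≤ h := by
    obtain ⟨e, hbr⟩ := hbridge
    induction e using Sym2.ind with
    | _ x y =>
    have hxy : x ≠ y := by
      intro hcon
      have hd := G.not_isDiag_of_mem_edgeSet (aux_bridge_mem hconn hbr)
      rw [Sym2.isDiag_iff_proj_eq] at hd; exact hd hcon
    have hadj : (cutG G).Adj x y := by
      rw [cutG, fromEdgeSet_adj]; exact ⟨hbr, hxy⟩
    have hx : x ∈ ((cutG G).connectedComponentMk x).supp := by
      rw [SimpleGraph.ConnectedComponent.mem_supp_iff]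
    have hy : y ∈ ((cutG G).connectedComponentMk x).supp := by
      rw [SimpleGraph.ConnectedComponent.mem_supp_iff]
      exact ((SimpleGraph.ConnectedComponent.sound hadj.reachable)).symm
    have hee : s((⟨x, hx⟩ : ↥((cutG G).connectedComponentMk x).supp), ⟨y, hy⟩)
        ∈ ((cutG G).induce ((cutG G).connectedComponentMk x).supp).edgeSet := by
      rw [mem_edgeSet]
      exact hadj
    have hlt := hcKlt _ _ hee
    have hle := hKle ((cutG G).connectedComponentMk x)
    omega
  have hc0' : ∀ e ∈ E0, ¬G.IsBridge e → cc e = 0 := by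
    intro e he hnb
    rw [hccdef]
    simp only [if_neg hnb, if_pos he]
  have hch' : ∀ e ∈ G.edgeSet, e ∉ E0 → ¬G.IsBridge e → cc e = h := by
    intro e he hne hnb
    rw [hccdef]
    simp only [if_neg hnb, if_neg hne, if_pos he]
  have hcfcK' : ∀ (K : (cutG G).ConnectedComponent) (u' v' : ↥K.supp), u' ≠ v' →
      ∃ q : ((cutG G).induce K.supp).Walk u' v', q.IsPath ∧
        ∃ col, ((q.edges.map (Sym2.map Subtype.val)).map cc).count col = 1 := by
    intro K u' v' hne
    obtain ⟨q, hqp, col, hqc⟩ := hcKcfc K u' v' hne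
    refine ⟨q, hqp, col, ?_⟩
    rw [List.map_map]
    rw [show q.edges.map (cc ∘ Sym2.map Subtype.val) = q.edges.map (cK K) from
      List.map_congr_left fun ee hee => hcompat K ee (q.edges_subset_edgeSet hee)]
    exact hqc
  apply Nat.sInf_le
  refine ⟨cc, ?_, ?_⟩
  · intro e he
    by_cases hbr : G.IsBridge e
    · exact Nat.lt_succ_of_lt (hcbr e hbr)
    · by_cases hmem : e ∈ E0
      · rw [hc0' e hmem hbr]; omega
      · rw [hch' e he hmem hbr]; omega
  · intro u v huv
    obtain ⟨w0⟩ := hconn.preconnected u v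
    obtain ⟨r, hrp, col, hrc⟩ :=
      aux_main hE0 hTconn hTbr hc0' hch' hcbr hh1 hcfcK' huv w0.toPath.1 w0.toPath.2
    exact ⟨r, hrp, col, hrc⟩

end Final

/-- h(G) ≤ cfc(G) ≤ h(G) + 1 for a connected graph with a cut-edge. -/
theorem stmt_12 {V : Type u} [Fintype V] (G : SimpleGraph V) (hconn : G.Connected)
    (hbridge : ∃ e, G.IsBridge e) :
    hG G ≤ cfcNum G ∧ cfcNum G ≤ hG G + 1 :=
  ⟨aux_lower G hconn, aux_upper G hconn hbridge⟩
end
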